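/- Let P be a partition of T into three simply connected districts such that C_1 ∈ P_1. Then exactly one of the following four conditions holds: (A) there exist adjacent vertices a ∈ P_2 ∩ bd(T) and b ∈ P_3 ∩ bd(T); (B) P_2 ∩ bd(T) = ∅; (C) P_3 ∩ bd(T) = ∅; (D) no vertex of P_2 is adjacent to any vertex of P_3. -/

import Mathlib

namespace Redistrict

/-!
Common definitions: the triangular lattice `G_Δ`, the triangular region `T` of side
length `n`, simply connected sets, partitions into three simply connected districts,
recombination moves, the state space `Ω` and the graph `G_Ω`.
-/

/-- The infinite triangular lattice graph `G_Δ` on `ℤ²`: two vertices are adjacent iff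
their difference is one of `(1,0),(-1,0),(0,1),(0,-1),(1,-1),(-1,1)`. -/
def TriLattice : SimpleGraph (ℤ × ℤ) :=
  SimpleGraph.fromRel (fun v w => v - w = (1, 0) ∨ v - w = (0, 1) ∨ v - w = (1, -1))

/-- The triangular region `T` of side length `n`, oriented with a vertical right edge:
column `x` (for `1 ≤ x ≤ n`) consists of the `x` vertices `(x, y)` with `1 - x ≤ y ≤ 0`.
It has `n (n+1) / 2` vertices, `n` on each side. -/
def Tset (n : ℕ) : Set (ℤ × ℤ) :=
  {p | 1 ≤ p.1 ∧ p.1 ≤ (n : ℤ) ∧ 1 - p.1 ≤ p.2 ∧ p.2 ≤ 0}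

/-- The neighborhood `N(v)` of a vertex of the triangular lattice. -/
def nbhd (v : ℤ × ℤ) : Set (ℤ × ℤ) := {w | TriLattice.Adj v w}

/-- The boundary `bd(T)`: vertices of `T` adjacent to some vertex outside `T`. -/
def bdT (n : ℕ) : Set (ℤ × ℤ) :=
  {v ∈ Tset n | ∃ w, TriLattice.Adj v w ∧ w ∉ Tset n}

/-- A corner of `T`: a vertex of `T` with exactly two neighbors in `T`. -/
def IsCorner (n : ℕ) (v : ℤ × ℤ) : Prop :=
  v ∈ Tset n ∧ (nbhd v ∩ Tset n).ncard = 2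

/-- The subgraph of `G_Δ` induced on `S` is connected. -/
def ConnSet (S : Set (ℤ × ℤ)) : Prop := (TriLattice.induce S).Connected

/-- A set of vertices is simply connected if it induces a connected subgraph of `G_Δ`
and its complement induces a connected subgraph of `G_Δ`. -/
def SimplyConn (S : Set (ℤ × ℤ)) : Prop := ConnSet S ∧ ConnSet Sᶜ

/-- A partition of `T` (of side length `n`) into three simply connected districts
`P 0`, `P 1`, `P 2` (the paper's `P_1, P_2, P_3`). -/
structure TriPartition (n : ℕ) where
  P : Fin 3 → Set (ℤ × ℤ)
  disj : ∀ i j : Fin 3, i ≠ j → Disjoint (P i) (P j)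
  cover : (⋃ i, P i) = Tset n
  sc : ∀ i, SimplyConn (P i)

/-- A recombination move: the two partitions differ, and some district of one is
identical to some district of the other. -/
def RecombMove {n : ℕ} (σ τ : TriPartition n) : Prop :=
  σ ≠ τ ∧ ∃ i j : Fin 3, σ.P i = τ.P j

/-- A partition is balanced (w.r.t. ideal sizes `k`) if `|P_i| = k_i` for each `i`. -/
def IsBalanced {n : ℕ} (k : Fin 3 → ℕ) (σ : TriPartition n) : Prop :=
  ∀ i, (σ.P i).ncard = k i

/-- `k_i - 1 ≤ |P_i| ≤ k_i + 1` for each `i`, i.e. balanced or nearly balanced. -/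
def InOmega {n : ℕ} (k : Fin 3 → ℕ) (σ : TriPartition n) : Prop :=
  ∀ i, k i ≤ (σ.P i).ncard + 1 ∧ (σ.P i).ncard ≤ k i + 1

/-- A partition is nearly balanced if it is not balanced but
`k_i - 1 ≤ |P_i| ≤ k_i + 1` for each `i`. -/
def NearlyBalanced {n : ℕ} (k : Fin 3 → ℕ) (σ : TriPartition n) : Prop :=
  ¬ IsBalanced k σ ∧ InOmega k σ

lemma IsBalanced.inOmega {n : ℕ} {k : Fin 3 → ℕ} {σ : TriPartition n}
    (h : IsBalanced k σ) : InOmega k σ := fun i => by have := h i; omega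

/-- The state space `Ω` of all balanced and nearly balanced partitions. -/
abbrev Omega (n : ℕ) (k : Fin 3 → ℕ) : Type := {σ : TriPartition n // InOmega k σ}

/-- The graph `G_Ω` on `Ω` whose edges are the recombination moves. -/
def GOmega (n : ℕ) (k : Fin 3 → ℕ) : SimpleGraph (Omega n k) where
  Adj σ τ := RecombMove σ.val τ.val
  symm := by
    constructor
    intro σ τ h
    obtain ⟨hne, i, j, hij⟩ := h
    exact ⟨Ne.symm hne, j, i, hij.symm⟩
  loopless := by
    constructor
    intro σ h
    obtain ⟨hne, -⟩ := h
    exact hne rfl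

/-- The columns of `T`: `colEq n i` is the `i`-th column `C_i` (vertices with first
coordinate `i`), and `colLT`, `colLE`, `colGT` are `C_{<i}`, `C_{≤i}`, `C_{>i}`. -/
def colEq (n i : ℕ) : Set (ℤ × ℤ) := {p ∈ Tset n | p.1 = (i : ℤ)}

def colLT (n i : ℕ) : Set (ℤ × ℤ) := {p ∈ Tset n | p.1 < (i : ℤ)}

def colLE (n i : ℕ) : Set (ℤ × ℤ) := {p ∈ Tset n | p.1 ≤ (i : ℤ)}

def colGT (n i : ℕ) : Set (ℤ × ℤ) := {p ∈ Tset n | (i : ℤ) < p.1}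

/-- The single leftmost vertex `C_1` of `T`. -/
def c1 : ℤ × ℤ := (1, 0)

/-- A vertex of `P_i` is exposed if it is adjacent to a vertex of `T` in another district. -/
def Exposed {n : ℕ} (σ : TriPartition n) (i : Fin 3) (v : ℤ × ℤ) : Prop :=
  v ∈ σ.P i ∧ ∃ w ∈ Tset n, TriLattice.Adj v w ∧ w ∉ σ.P i

/-- `S` is a connected component of `A`: a nonempty maximal connected subset of `A`. -/
def IsCompOf (S A : Set (ℤ × ℤ)) : Prop :=
  S.Nonempty ∧ S ⊆ A ∧ ConnSet S ∧ ∀ S', S ⊆ S' → S' ⊆ A → ConnSet S' → S' = S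

/-- Reassigning the vertex `v` to district `j` (removing it from the other districts)
yields again a partition of `T` into three simply connected districts. -/
def FlipTo {n : ℕ} (σ : TriPartition n) (v : ℤ × ℤ) (j : Fin 3) : Prop :=
  ∃ τ : TriPartition n, τ.P j = σ.P j ∪ {v} ∧ ∀ l, l ≠ j → τ.P l = σ.P l \ {v}

/-- `τ` is obtained from `σ` by reassigning the single vertex `v` to a new district. -/
def FlipMove {n : ℕ} (σ τ : TriPartition n) (v : ℤ × ℤ) : Prop :=
  ∃ j : Fin 3, v ∉ σ.P j ∧ τ.P j = σ.P j ∪ {v} ∧ ∀ l, l ≠ j → τ.P l = σ.P l \ {v}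

/-- A subset `S` of `P_i` is shrinkable if it contains a vertex that can be removed
from `P_i` and added to a different district, producing a valid partition. -/
def Shrinkable {n : ℕ} (σ : TriPartition n) (i : Fin 3) (S : Set (ℤ × ℤ)) : Prop :=
  ∃ x ∈ S, ∃ j : Fin 3, j ≠ i ∧ FlipTo σ x j

/-- The six unit directions of the triangular lattice. -/
def triDir (d : ℤ × ℤ) : Prop :=
  d = (1, 0) ∨ d = (-1, 0) ∨ d = (0, 1) ∨ d = (0, -1) ∨ d = (1, -1) ∨ d = (-1, 1)

/-- The `l`-th vertex (1-indexed) on the lattice line through `base` with direction `dir`. -/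
def towerVtx (base dir : ℤ × ℤ) (l : ℕ) : ℤ × ℤ := base + ((l : ℤ) - 1) • dir

/-- A tower for the partition `σ`: a sequence `v_1, …, v_t` (`t ≥ 2`) of consecutive
vertices on a straight lattice line such that `v_1` is in the same district as both common
neighbors of `v_1` and `v_2`; no two consecutive tower vertices are in the same district;
for `2 ≤ l ≤ t`, moving `v_l` to the district of `v_{l-1}` does not yield a valid
partition; and the next vertex `v_{t+1}` on the line cannot be appended to the tower. -/
structure Tower (n : ℕ) (σ : TriPartition n) where
  t : ℕ
  base : ℤ × ℤ
  dir : ℤ × ℤ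
  dst : ℕ → Fin 3
  two_le : 2 ≤ t
  dir_mem : triDir dir
  mem : ∀ l, 1 ≤ l → l ≤ t → towerVtx base dir l ∈ σ.P (dst l)
  top : ∀ u, TriLattice.Adj u (towerVtx base dir 1) →
      TriLattice.Adj u (towerVtx base dir 2) → u ∈ σ.P (dst 1)
  alt : ∀ l, 1 ≤ l → l < t → dst l ≠ dst (l + 1)
  stuck : ∀ l, 2 ≤ l → l ≤ t → ¬ FlipTo σ (towerVtx base dir l) (dst (l - 1))
  maximal : ¬ ∃ c : Fin 3, towerVtx base dir (t + 1) ∈ σ.P c ∧ c ≠ dst t ∧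
      ¬ FlipTo σ (towerVtx base dir (t + 1)) (dst t)

/-- A parametrization of the boundary cycle of `T` (of side length `n`), of period
`3(n-1)`: it runs along the top edge, then the right vertical edge, then the hypotenuse. -/
def bdCycleFun (n : ℕ) (t : ℤ) : ℤ × ℤ :=
  let m : ℤ := 3 * ((n : ℤ) - 1)
  let s : ℤ := t % m
  if s < (n : ℤ) - 1 then (1 + s, 0)
  else if s < 2 * ((n : ℤ) - 1) then ((n : ℤ), ((n : ℤ) - 1) - s)
  else (3 * ((n : ℤ) - 1) + 1 - s, 1 - (3 * ((n : ℤ) - 1) + 1 - s))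

/-- A vertex is enclosed by (the vertex set of) a cycle `C` if it is not on `C` and the set
of vertices reachable from it in the lattice avoiding `C` is finite, i.e. it lies in the
bounded region of the plane determined by `C`. -/
def Enclosed (C : Set (ℤ × ℤ)) (u : ℤ × ℤ) : Prop :=
  ∃ hu : u ∈ Cᶜ,
    {w : ℤ × ℤ | ∃ hw : w ∈ Cᶜ, (TriLattice.induce Cᶜ).Reachable ⟨u, hu⟩ ⟨w, hw⟩}.Finite

/-- `N_C(y)`: the neighbors of `y` lying on or inside the cycle with vertex set `C`. -/
def cycNbhd (C : Set (ℤ × ℤ)) (y : ℤ × ℤ) : Set (ℤ × ℤ) :=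
  {w | TriLattice.Adj y w ∧ (w ∈ C ∨ Enclosed C w)}

/-- A triangular face: three mutually adjacent vertices. -/
def TriFace (a b c : ℤ × ℤ) : Prop :=
  TriLattice.Adj a b ∧ TriLattice.Adj b c ∧ TriLattice.Adj a c

/-- Twice the signed area of the triangle `a b c`; its sign gives the orientation
(clockwise vs. counterclockwise) of the triple in the planar embedding. -/
def detOr (a b c : ℤ × ℤ) : ℤ :=
  (b.1 - a.1) * (c.2 - a.2) - (b.2 - a.2) * (c.1 - a.1)

/-- Case (A): `P_2` and `P_3` have adjacent boundary vertices. -/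
def CondA (n : ℕ) (σ : TriPartition n) : Prop :=
  ∃ a b : ℤ × ℤ, a ∈ σ.P 1 ∩ bdT n ∧ b ∈ σ.P 2 ∩ bdT n ∧ TriLattice.Adj a b

/-- Case (B): `P_2` does not meet the boundary of `T`. -/
def CondB (n : ℕ) (σ : TriPartition n) : Prop := σ.P 1 ∩ bdT n = ∅

/-- Case (C): `P_3` does not meet the boundary of `T`. -/
def CondC (n : ℕ) (σ : TriPartition n) : Prop := σ.P 2 ∩ bdT n = ∅

/-- Case (D): no vertex of `P_2` is adjacent to any vertex of `P_3`. -/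
def CondD (n : ℕ) (σ : TriPartition n) : Prop :=
  ∀ a ∈ σ.P 1, ∀ b ∈ σ.P 2, ¬ TriLattice.Adj a b

abbrev V2 := ℤ × ℤ











lemma adj_iff {v w : V2} : TriLattice.Adj v w ↔
    (w.1 - v.1 = 1 ∧ w.2 - v.2 = 0) ∨ (w.1 - v.1 = -1 ∧ w.2 - v.2 = 0) ∨
    (w.1 - v.1 = 0 ∧ w.2 - v.2 = 1) ∨ (w.1 - v.1 = 0 ∧ w.2 - v.2 = -1) ∨
    (w.1 - v.1 = 1 ∧ w.2 - v.2 = -1) ∨ (w.1 - v.1 = -1 ∧ w.2 - v.2 = 1) := by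
  unfold TriLattice
  rw [SimpleGraph.fromRel_adj]
  simp only [ne_eq, Prod.ext_iff, Prod.fst_sub, Prod.snd_sub, Prod.fst_one, Prod.snd_one]
  constructor
  · rintro ⟨hne, h⟩
    omega
  · intro h
    constructor
    · intro he; omega
    · omega

/-- extract a chain (list path) from connectivity of an induced subgraph -/
lemma conn_chain {S : Set V2} (hS : ConnSet S) {a b : V2} (ha : a ∈ S) (hb : b ∈ S) :
    ∃ l : List V2, l.Chain' (fun v w => TriLattice.Adj v w ∧ v ∈ S ∧ w ∈ S) ∧
      l.head? = some a ∧ l.getLast? = some b ∧ ∀ x ∈ l, x ∈ S := by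
  obtain ⟨w⟩ := hS.preconnected ⟨a, ha⟩ ⟨b, hb⟩
  refine ⟨w.support.map (Subtype.val), ?_, ?_, ?_, ?_⟩
  · refine List.isChain_map_of_isChain Subtype.val ?_ w.isChain_adj_support
    rintro ⟨x, hx⟩ ⟨y, hy⟩ hxy
    exact ⟨hxy, hx, hy⟩
  · rw [List.head?_map, w.support_eq_cons]; rfl
  · rw [List.getLast?_map,
      List.getLast?_eq_getLast (by simp [SimpleGraph.Walk.support_ne_nil]),
      SimpleGraph.Walk.getLast_support w]
    rfl
  · intro x hx
    obtain ⟨y, hy, rfl⟩ := List.mem_map.mp hx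
    exact y.2

/-- separation: a set splitting into two nonempty pieces with no edges between is not connected -/
lemma not_conn_sep {S₁ S₂ : Set V2} (h1 : S₁.Nonempty) (h2 : S₂.Nonempty)
    (hd : Disjoint S₁ S₂)
    (hsep : ∀ v ∈ S₁, ∀ w ∈ S₂, ¬ TriLattice.Adj v w) : ¬ ConnSet (S₁ ∪ S₂) := by
  intro hc
  obtain ⟨a, ha⟩ := h1
  obtain ⟨b, hb⟩ := h2
  obtain ⟨w⟩ := hc.preconnected ⟨a, Or.inl ha⟩ ⟨b, Or.inr hb⟩
  have key : ∀ (x y : ↥(S₁ ∪ S₂)) (_ : (TriLattice.induce (S₁ ∪ S₂)).Walk x y),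
      (x : V2) ∈ S₁ → (y : V2) ∈ S₁ := by
    intro x y p
    induction p with
    | nil => exact fun h => h
    | cons hadj p ih =>
      intro hx
      rename_i u v' _
      rcases v'.2 with hv | hv
      · exact ih hv
      · exact absurd hadj (hsep _ hx _ hv)
  have := key _ _ w ha
  exact (hd.ne_of_mem this hb) rfl





def evec : Fin 3 → V2
  | 0 => (1, 0)
  | 1 => (0, 1)
  | 2 => (1, -1)

abbrev Edge2 := V2 × Fin 3

def eA (e : Edge2) : V2 := e.1
def eB (e : Edge2) : V2 := e.1 + evec e.2

open Classical in
noncomputable def ind (p : Prop) : ZMod 2 := if p then 1 else 0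

noncomputable def wsum (C : List Edge2) (f : Edge2 → ZMod 2) : ZMod 2 := (C.map f).sum

def crossE (z : V2) (e : Edge2) : Prop :=
  (e.2 = 1 ∧ e.1.2 = z.2 ∧ z.1 < e.1.1) ∨ (e.2 = 2 ∧ e.1.2 = z.2 + 1 ∧ z.1 ≤ e.1.1)

noncomputable def kap (C : List Edge2) (z : V2) : ZMod 2 := wsum C fun e => ind (crossE z e)
noncomputable def mem2 (C : List Edge2) (e : Edge2) : ZMod 2 := wsum C fun e' => ind (e' = e)

abbrev Face := V2 × Bool

def fEdges : Face → List Edge2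
  | (z, false) => [(z, 0), (z, 1), ((z.1, z.2 + 1), 2)]
  | (z, true)  => [((z.1, z.2 + 1), 0), ((z.1 + 1, z.2), 1), ((z.1, z.2 + 1), 2)]

def onFace (f : Face) (e : Edge2) : Prop := e ∈ fEdges f

noncomputable def fwt (C : List Edge2) (f : Face) : ZMod 2 := wsum C fun e => ind (onFace f e)

def evenFaced (C : List Edge2) : Prop := ∀ f : Face, fwt C f = 0

def Bnd (B : ℤ) (C : List Edge2) : Prop := ∀ e ∈ C, e.1.1 ≤ B

lemma fin3_tri : ∀ d : Fin 3, d = 0 ∨ d = 1 ∨ d = 2 := by decide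

lemma z2_cancel {a b : ZMod 2} (h : a + b = 0) : a = b := by revert h; revert a b; decide

lemma z2_shift {a b c : ZMod 2} (h : a + b = c) : a = b + c := by
  revert h; revert a b c; decide

lemma ind_true {p : Prop} (h : p) : ind p = 1 := by unfold ind; exact if_pos h
lemma ind_false {p : Prop} (h : ¬ p) : ind p = 0 := by unfold ind; exact if_neg h

lemma ind_congr {p q : Prop} (h : p ↔ q) : ind p = ind q := by
  unfold ind; split_ifs with h1 h2 <;> first | rfl | tauto

lemma wsum_congr {C : List Edge2} {f g : Edge2 → ZMod 2} (h : ∀ e ∈ C, f e = g e) :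
    wsum C f = wsum C g := by
  unfold wsum
  induction C with
  | nil => rfl
  | cons a t ih =>
    simp only [List.map_cons, List.sum_cons]
    rw [h a (by simp), ih (fun e he => h e (by simp [he]))]

lemma wsum_add {C : List Edge2} (f g : Edge2 → ZMod 2) :
    wsum C (fun e => f e + g e) = wsum C f + wsum C g := by
  unfold wsum
  induction C with
  | nil => simp
  | cons a t ih => simp only [List.map_cons, List.sum_cons, ih]; ring

lemma wsum_zero {C : List Edge2} {f : Edge2 → ZMod 2} (h : ∀ e ∈ C, f e = 0) :
    wsum C f = 0 := by
  rw [wsum_congr h]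
  show (C.map (fun _ => (0 : ZMod 2))).sum = 0
  simp

lemma wsum_append {C D : List Edge2} (f : Edge2 → ZMod 2) :
    wsum (C ++ D) f = wsum C f + wsum D f := by
  unfold wsum; simp

lemma wsum_flatMap {α : Type*} (L : List α) (g : α → List Edge2) (f : Edge2 → ZMod 2) :
    wsum (L.flatMap g) f = (L.map (fun a => wsum (g a) f)).sum := by
  induction L with
  | nil => rfl
  | cons a t ih => simp [List.flatMap_cons, wsum_append, ih]

lemma wsum_sum {ι : Type*} (s : Finset ι) (C : List Edge2) (F : ι → Edge2 → ZMod 2) :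
    ∑ i ∈ s, wsum C (F i) = wsum C (fun e => ∑ i ∈ s, F i e) := by
  classical
  induction s using Finset.induction_on with
  | empty =>
    simp only [Finset.sum_empty]
    exact (wsum_zero (fun e he => rfl)).symm
  | insert _ _ hni ih =>
    rename_i a s
    rw [Finset.sum_insert hni, ih, ← wsum_add]
    exact wsum_congr (fun e he => by rw [Finset.sum_insert hni])

lemma sum_ind_range (M : ℕ) (j : ℤ) (P : Prop) :
    (∑ k ∈ Finset.range M, ind ((k : ℤ) = j ∧ P)) = ind (0 ≤ j ∧ j < (M : ℤ) ∧ P) := by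
  induction M with
  | zero =>
    simp only [Finset.sum_range_zero]
    exact (ind_false (by rintro ⟨h1, h2, -⟩; omega)).symm
  | succ M ih =>
    rw [Finset.sum_range_succ, ih]
    by_cases hP : P
    · by_cases hj : (M : ℤ) = j
      · rw [ind_false (by rintro ⟨h1, h2, -⟩; omega), ind_true ⟨hj, hP⟩,
          ind_true ⟨by omega, by push_cast; omega, hP⟩, zero_add]
      · by_cases hr : 0 ≤ j ∧ j < (M : ℤ)
        · rw [ind_true ⟨hr.1, hr.2, hP⟩, ind_false (by rintro ⟨h, -⟩; omega),
            ind_true ⟨hr.1, by push_cast; omega, hP⟩, add_zero]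
        · rw [ind_false (by rintro ⟨h1, h2, -⟩; exact hr ⟨h1, h2⟩),
            ind_false (by rintro ⟨h, -⟩; omega),
            ind_false (by rintro ⟨h1, h2, -⟩; push_cast at h2; exact hr ⟨h1, by omega⟩),
            add_zero]
    · rw [ind_false (by rintro ⟨-, -, h⟩; exact hP h),
        ind_false (by rintro ⟨-, h⟩; exact hP h),
        ind_false (by rintro ⟨-, -, h⟩; exact hP h), add_zero]

lemma onFace_L {z : V2} {e : Edge2} :
    onFace (z, false) e ↔ e = (z, 0) ∨ e = (z, 1) ∨ e = ((z.1, z.2 + 1), 2) := by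
  simp [onFace, fEdges]

lemma onFace_U {z : V2} {e : Edge2} :
    onFace (z, true) e ↔
      e = ((z.1, z.2 + 1), 0) ∨ e = ((z.1 + 1, z.2), 1) ∨ e = ((z.1, z.2 + 1), 2) := by
  simp [onFace, fEdges]

lemma ind_or3 {p q r : Prop} (hpq : p → q → False) (hpr : p → r → False)
    (hqr : q → r → False) : ind (p ∨ q ∨ r) = ind p + ind q + ind r := by
  unfold ind
  split_ifs <;> first | rfl | decide | tauto

lemma dir_ne {a b : V2} {i j : Fin 3} (h : i ≠ j) (he : (a, i) = (b, j)) : False := by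
  rw [Prod.mk.injEq] at he; exact h he.2

lemma fwt_L (C : List Edge2) (z : V2) :
    fwt C (z, false) = mem2 C (z, 0) + mem2 C (z, 1) + mem2 C ((z.1, z.2 + 1), 2) := by
  unfold fwt mem2
  rw [← wsum_add, ← wsum_add]
  refine wsum_congr (fun e he => ?_)
  rw [ind_congr onFace_L,
    ind_or3 (by rintro rfl h; exact dir_ne (by decide) h)
      (by rintro rfl h; exact dir_ne (by decide) h)
      (by rintro rfl h; exact dir_ne (by decide) h)]

lemma fwt_U (C : List Edge2) (z : V2) :
    fwt C (z, true) = mem2 C ((z.1, z.2 + 1), 0) + mem2 C ((z.1 + 1, z.2), 1)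
      + mem2 C ((z.1, z.2 + 1), 2) := by
  unfold fwt mem2
  rw [← wsum_add, ← wsum_add]
  refine wsum_congr (fun e he => ?_)
  rw [ind_congr onFace_U,
    ind_or3 (by rintro rfl h; exact dir_ne (by decide) h)
      (by rintro rfl h; exact dir_ne (by decide) h)
      (by rintro rfl h; exact dir_ne (by decide) h)]


def lamS (z : V2) (e : Edge2) : Prop := e.2 = 0 ∧ e.1.2 = z.2 + 1 ∧ z.1 ≤ e.1.1

noncomputable def lam (C : List Edge2) (z : V2) : ZMod 2 := wsum C fun e => ind (lamS z e)

lemma kap_far {C : List Edge2} {B : ℤ} (hB : Bnd B C) {z : V2} (hz : B < z.1) :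
    kap C z = 0 := by
  refine wsum_zero (fun e he => ind_false ?_)
  rintro (⟨-, -, h⟩ | ⟨-, -, h⟩) <;> have := hB e he <;> omega

lemma crossE0 (z : V2) (x y : ℤ) : crossE z ((x, y), (0 : Fin 3)) ↔ False := by
  unfold crossE
  simp only [iff_false]
  rintro (⟨h, -⟩ | ⟨h, -⟩)
  · exact absurd h (show ¬ (0 : Fin 3) = 1 by decide)
  · exact absurd h (show ¬ (0 : Fin 3) = 2 by decide)

lemma crossE1 (z : V2) (x y : ℤ) : crossE z ((x, y), (1 : Fin 3)) ↔ (y = z.2 ∧ z.1 < x) := by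
  unfold crossE
  constructor
  · rintro (⟨-, h2, h3⟩ | ⟨h, -⟩)
    · exact ⟨h2, h3⟩
    · exact absurd h (show ¬ (1 : Fin 3) = 2 by decide)
  · rintro ⟨h2, h3⟩; exact Or.inl ⟨rfl, h2, h3⟩

lemma crossE2 (z : V2) (x y : ℤ) : crossE z ((x, y), (2 : Fin 3)) ↔ (y = z.2 + 1 ∧ z.1 ≤ x) := by
  unfold crossE
  constructor
  · rintro (⟨h, -⟩ | ⟨-, h2, h3⟩)
    · exact absurd h (show ¬ (2 : Fin 3) = 1 by decide)
    · exact ⟨h2, h3⟩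
  · rintro ⟨h2, h3⟩; exact Or.inr ⟨rfl, h2, h3⟩

lemma lamS0 (z : V2) (x y : ℤ) : lamS z ((x, y), (0 : Fin 3)) ↔ (y = z.2 + 1 ∧ z.1 ≤ x) := by
  unfold lamS
  constructor
  · rintro ⟨-, h2, h3⟩; exact ⟨h2, h3⟩
  · rintro ⟨h2, h3⟩; exact ⟨rfl, h2, h3⟩

lemma lamS1 (z : V2) (x y : ℤ) : lamS z ((x, y), (1 : Fin 3)) ↔ False := by
  unfold lamS
  simp only [iff_false]
  rintro ⟨h, -, -⟩; exact absurd h (show ¬ (1 : Fin 3) = 0 by decide)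

lemma lamS2 (z : V2) (x y : ℤ) : lamS z ((x, y), (2 : Fin 3)) ↔ False := by
  unfold lamS
  simp only [iff_false]
  rintro ⟨h, -, -⟩; exact absurd h (show ¬ (2 : Fin 3) = 0 by decide)

lemma edge_eq_iff (x y a b : ℤ) (d : Fin 3) :
    ((((x, y) : V2), d) = (((a, b) : V2), d)) ↔ (x = a ∧ y = b) := by
  rw [Prod.mk.injEq, Prod.mk.injEq]
  constructor
  · rintro ⟨⟨h1, h2⟩, -⟩; exact ⟨h1, h2⟩
  · rintro ⟨h1, h2⟩; exact ⟨⟨h1, h2⟩, rfl⟩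

lemma edge_ne_dir {x y a b : ℤ} {i j : Fin 3} (h : i ≠ j) :
    ¬ ((((x, y) : V2), i) = (((a, b) : V2), j)) := fun he => dir_ne h he

lemma onFaceL0 (w : V2) (x y : ℤ) :
    onFace (w, false) ((x, y), (0 : Fin 3)) ↔ (x = w.1 ∧ y = w.2) := by
  rw [onFace_L]
  constructor
  · rintro (h | h | h)
    · rw [Prod.mk.injEq, Prod.mk.injEq] at h
      exact ⟨h.1.1, by rw [h.1.2]⟩
    · exact absurd h (edge_ne_dir (by decide))
    · exact absurd h (edge_ne_dir (by decide))
  · rintro ⟨h1, h2⟩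
    exact Or.inl (by rw [Prod.mk.injEq, Prod.mk.injEq]; exact ⟨⟨h1, by rw [h2]⟩, rfl⟩)

lemma onFaceL1 (w : V2) (x y : ℤ) :
    onFace (w, false) ((x, y), (1 : Fin 3)) ↔ (x = w.1 ∧ y = w.2) := by
  rw [onFace_L]
  constructor
  · rintro (h | h | h)
    · exact absurd h (edge_ne_dir (by decide))
    · rw [Prod.mk.injEq, Prod.mk.injEq] at h
      exact ⟨h.1.1, by rw [h.1.2]⟩
    · exact absurd h (edge_ne_dir (by decide))
  · rintro ⟨h1, h2⟩
    exact Or.inr (Or.inl (by rw [Prod.mk.injEq, Prod.mk.injEq]; exact ⟨⟨h1, by rw [h2]⟩, rfl⟩))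

lemma onFaceL2 (w : V2) (x y : ℤ) :
    onFace (w, false) ((x, y), (2 : Fin 3)) ↔ (x = w.1 ∧ y = w.2 + 1) := by
  rw [onFace_L]
  constructor
  · rintro (h | h | h)
    · exact absurd h (edge_ne_dir (by decide))
    · exact absurd h (edge_ne_dir (by decide))
    · rw [Prod.mk.injEq, Prod.mk.injEq] at h
      exact ⟨h.1.1, h.1.2⟩
  · rintro ⟨h1, h2⟩
    exact Or.inr (Or.inr (by rw [Prod.mk.injEq, Prod.mk.injEq]; exact ⟨⟨h1, h2⟩, rfl⟩))

lemma onFaceU0 (w : V2) (x y : ℤ) :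
    onFace (w, true) ((x, y), (0 : Fin 3)) ↔ (x = w.1 ∧ y = w.2 + 1) := by
  rw [onFace_U]
  constructor
  · rintro (h | h | h)
    · rw [Prod.mk.injEq, Prod.mk.injEq] at h
      exact ⟨h.1.1, h.1.2⟩
    · exact absurd h (edge_ne_dir (by decide))
    · exact absurd h (edge_ne_dir (by decide))
  · rintro ⟨h1, h2⟩
    exact Or.inl (by rw [Prod.mk.injEq, Prod.mk.injEq]; exact ⟨⟨h1, h2⟩, rfl⟩)

lemma onFaceU1 (w : V2) (x y : ℤ) :
    onFace (w, true) ((x, y), (1 : Fin 3)) ↔ (x = w.1 + 1 ∧ y = w.2) := by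
  rw [onFace_U]
  constructor
  · rintro (h | h | h)
    · exact absurd h (edge_ne_dir (by decide))
    · rw [Prod.mk.injEq, Prod.mk.injEq] at h
      exact ⟨h.1.1, h.1.2⟩
    · exact absurd h (edge_ne_dir (by decide))
  · rintro ⟨h1, h2⟩
    exact Or.inr (Or.inl (by rw [Prod.mk.injEq, Prod.mk.injEq]; exact ⟨⟨h1, h2⟩, rfl⟩))

lemma onFaceU2 (w : V2) (x y : ℤ) :
    onFace (w, true) ((x, y), (2 : Fin 3)) ↔ (x = w.1 ∧ y = w.2 + 1) := by
  rw [onFace_U]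
  constructor
  · rintro (h | h | h)
    · exact absurd h (edge_ne_dir (by decide))
    · exact absurd h (edge_ne_dir (by decide))
    · rw [Prod.mk.injEq, Prod.mk.injEq] at h
      exact ⟨h.1.1, h.1.2⟩
  · rintro ⟨h1, h2⟩
    exact Or.inr (Or.inr (by rw [Prod.mk.injEq, Prod.mk.injEq]; exact ⟨⟨h1, h2⟩, rfl⟩))

lemma flipH (C : List Edge2) (z : V2) :
    kap C z + kap C (z.1 + 1, z.2)
      = mem2 C ((z.1 + 1, z.2), 1) + mem2 C ((z.1, z.2 + 1), 2) := by
  unfold kap mem2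
  rw [← wsum_add, ← wsum_add]
  refine wsum_congr (fun e he => ?_)
  obtain ⟨⟨x, y⟩, d⟩ := e
  rcases fin3_tri d with rfl | rfl | rfl
  · rw [ind_congr (crossE0 z x y), ind_congr (crossE0 (z.1 + 1, z.2) x y),
      ind_false (edge_ne_dir (x := x) (y := y) (i := 0) (j := 1) (by decide)),
      ind_false (edge_ne_dir (x := x) (y := y) (i := 0) (j := 2) (by decide))]
    simp [ind]
  · rw [ind_congr (crossE1 z x y), ind_congr (crossE1 (z.1 + 1, z.2) x y),
      ind_congr (edge_eq_iff x y (z.1 + 1) z.2 1),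
      ind_false (edge_ne_dir (x := x) (y := y) (i := 1) (j := 2) (by decide))]
    simp only
    unfold ind
    split_ifs <;> first | rfl | decide | (exfalso; omega)
  · rw [ind_congr (crossE2 z x y), ind_congr (crossE2 (z.1 + 1, z.2) x y),
      ind_congr (edge_eq_iff x y z.1 (z.2 + 1) 2),
      ind_false (edge_ne_dir (x := x) (y := y) (i := 2) (j := 1) (by decide))]
    simp only
    unfold ind
    split_ifs <;> first | rfl | decide | (exfalso; omega)

lemma strip1 {C : List Edge2} {B : ℤ} (hC : evenFaced C) (hB : Bnd B C) (z : V2) :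
    kap C z = lam C z := by
  set M : ℕ := (B + 1 - z.1).toNat with hM
  have h0 : ∑ k ∈ Finset.range M, fwt C ((z.1 + (k : ℤ), z.2), true) = 0 :=
    Finset.sum_eq_zero (fun k _ => hC _)
  unfold fwt at h0
  rw [wsum_sum] at h0
  have key : ∀ e ∈ C, (∑ k ∈ Finset.range M, ind (onFace ((z.1 + (k : ℤ), z.2), true) e))
      = ind (crossE z e) + ind (lamS z e) := by
    intro e he
    have hxB : e.1.1 ≤ B := hB e he
    have hMM : (M : ℤ) = (B + 1 - z.1).toNat := by rw [hM]
    obtain ⟨⟨x, y⟩, d⟩ := e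
    simp only at hxB
    rcases fin3_tri d with rfl | rfl | rfl
    · have hiff : ∀ k : ℕ, onFace ((z.1 + (k : ℤ), z.2), true) ((x, y), (0 : Fin 3))
          ↔ ((k : ℤ) = x - z.1 ∧ y = z.2 + 1) := by
        intro k
        rw [onFaceU0]
        constructor
        · rintro ⟨h1, h2⟩; exact ⟨by omega, by omega⟩
        · rintro ⟨h1, h2⟩; exact ⟨by omega, by omega⟩
      refine ((Finset.sum_congr rfl fun k _ => ind_congr (hiff k)).trans
        ((sum_ind_range M (x - z.1) _).trans ?_))
      rw [ind_congr (crossE0 z x y), ind_congr (lamS0 z x y), ind_false (fun h => h)]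
      rw [zero_add]
      refine ind_congr ?_
      constructor
      · rintro ⟨h1, h2, h3⟩; exact ⟨by omega, by omega⟩
      · rintro ⟨h1, h2⟩; exact ⟨by omega, by omega, by omega⟩
    · have hiff : ∀ k : ℕ, onFace ((z.1 + (k : ℤ), z.2), true) ((x, y), (1 : Fin 3))
          ↔ ((k : ℤ) = x - z.1 - 1 ∧ y = z.2) := by
        intro k
        rw [onFaceU1]
        constructor
        · rintro ⟨h1, h2⟩; exact ⟨by omega, by omega⟩
        · rintro ⟨h1, h2⟩; exact ⟨by omega, by omega⟩
      refine ((Finset.sum_congr rfl fun k _ => ind_congr (hiff k)).trans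
        ((sum_ind_range M (x - z.1 - 1) _).trans ?_))
      rw [ind_congr (crossE1 z x y), ind_congr (lamS1 z x y), ind_false (fun h => h)]
      rw [add_zero]
      refine ind_congr ?_
      constructor
      · rintro ⟨h1, h2, h3⟩; exact ⟨by omega, by omega⟩
      · rintro ⟨h1, h2⟩; exact ⟨by omega, by omega, by omega⟩
    · have hiff : ∀ k : ℕ, onFace ((z.1 + (k : ℤ), z.2), true) ((x, y), (2 : Fin 3))
          ↔ ((k : ℤ) = x - z.1 ∧ y = z.2 + 1) := by
        intro k
        rw [onFaceU2]
        constructor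
        · rintro ⟨h1, h2⟩; exact ⟨by omega, by omega⟩
        · rintro ⟨h1, h2⟩; exact ⟨by omega, by omega⟩
      refine ((Finset.sum_congr rfl fun k _ => ind_congr (hiff k)).trans
        ((sum_ind_range M (x - z.1) _).trans ?_))
      rw [ind_congr (crossE2 z x y), ind_congr (lamS2 z x y), ind_false (fun h => h)]
      rw [add_zero]
      refine ind_congr ?_
      constructor
      · rintro ⟨h1, h2, h3⟩; exact ⟨by omega, by omega⟩
      · rintro ⟨h1, h2⟩; exact ⟨by omega, by omega, by omega⟩
  rw [wsum_congr key, wsum_add] at h0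
  exact z2_cancel h0

lemma strip2 {C : List Edge2} {B : ℤ} (hC : evenFaced C) (hB : Bnd B C) (z : V2) :
    lam C z + lam C (z.1, z.2 + 1) = mem2 C ((z.1, z.2 + 1), 1) := by
  set M : ℕ := (B + 1 - z.1).toNat with hM
  have h0 : ∑ k ∈ Finset.range M,
      (fwt C ((z.1 + (k : ℤ), z.2 + 1), false) + fwt C ((z.1 + (k : ℤ), z.2 + 1), true)) = 0 :=
    Finset.sum_eq_zero (fun k _ => by rw [hC _, hC _, add_zero])
  unfold fwt at h0
  have h0' : (wsum C fun e => ∑ k ∈ Finset.range M,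
      (ind (onFace ((z.1 + (k : ℤ), z.2 + 1), false) e)
        + ind (onFace ((z.1 + (k : ℤ), z.2 + 1), true) e))) = 0 := by
    rw [← wsum_sum]
    rw [Finset.sum_congr rfl (fun k _ => (wsum_add _ _).symm)] at h0
    exact h0
  have key : ∀ e ∈ C, (∑ k ∈ Finset.range M,
      (ind (onFace ((z.1 + (k : ℤ), z.2 + 1), false) e)
        + ind (onFace ((z.1 + (k : ℤ), z.2 + 1), true) e)))
      = ind (lamS z e) + ind (lamS (z.1, z.2 + 1) e) + ind (e = ((z.1, z.2 + 1), 1)) := by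
    intro e he
    have hxB : e.1.1 ≤ B := hB e he
    have hMM : (M : ℤ) = (B + 1 - z.1).toNat := by rw [hM]
    obtain ⟨⟨x, y⟩, d⟩ := e
    simp only at hxB
    rw [Finset.sum_add_distrib]
    rcases fin3_tri d with rfl | rfl | rfl
    · have hiffL : ∀ k : ℕ, onFace ((z.1 + (k : ℤ), z.2 + 1), false) ((x, y), (0 : Fin 3))
          ↔ ((k : ℤ) = x - z.1 ∧ y = z.2 + 1) := by
        intro k
        rw [onFaceL0]
        constructor
        · rintro ⟨h1, h2⟩; exact ⟨by omega, by omega⟩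
        · rintro ⟨h1, h2⟩; exact ⟨by omega, by omega⟩
      have hiffU : ∀ k : ℕ, onFace ((z.1 + (k : ℤ), z.2 + 1), true) ((x, y), (0 : Fin 3))
          ↔ ((k : ℤ) = x - z.1 ∧ y = z.2 + 2) := by
        intro k
        rw [onFaceU0]
        constructor
        · rintro ⟨h1, h2⟩; exact ⟨by omega, by omega⟩
        · rintro ⟨h1, h2⟩; exact ⟨by omega, by omega⟩
      refine (congrArg₂ (· + ·)
        ((Finset.sum_congr rfl fun k _ => ind_congr (hiffL k)).trans
          (sum_ind_range M (x - z.1) _))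
        ((Finset.sum_congr rfl fun k _ => ind_congr (hiffU k)).trans
          (sum_ind_range M (x - z.1) _))).trans ?_
      rw [ind_congr (lamS0 z x y), ind_congr (lamS0 (z.1, z.2 + 1) x y),
        ind_false (edge_ne_dir (x := x) (y := y) (i := 0) (j := 1) (by decide))]
      rw [add_zero]
      simp only
      refine congrArg₂ (· + ·) (ind_congr ?_) (ind_congr ?_)
      · constructor
        · rintro ⟨h1, h2, h3⟩; exact ⟨by omega, by omega⟩
        · rintro ⟨h1, h2⟩; exact ⟨by omega, by omega, by omega⟩
      · constructor
        · rintro ⟨h1, h2, h3⟩; exact ⟨by omega, by omega⟩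
        · rintro ⟨h1, h2⟩; exact ⟨by omega, by omega, by omega⟩
    · have hiffL : ∀ k : ℕ, onFace ((z.1 + (k : ℤ), z.2 + 1), false) ((x, y), (1 : Fin 3))
          ↔ ((k : ℤ) = x - z.1 ∧ y = z.2 + 1) := by
        intro k
        rw [onFaceL1]
        constructor
        · rintro ⟨h1, h2⟩; exact ⟨by omega, by omega⟩
        · rintro ⟨h1, h2⟩; exact ⟨by omega, by omega⟩
      have hiffU : ∀ k : ℕ, onFace ((z.1 + (k : ℤ), z.2 + 1), true) ((x, y), (1 : Fin 3))
          ↔ ((k : ℤ) = x - z.1 - 1 ∧ y = z.2 + 1) := by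
        intro k
        rw [onFaceU1]
        constructor
        · rintro ⟨h1, h2⟩; exact ⟨by omega, by omega⟩
        · rintro ⟨h1, h2⟩; exact ⟨by omega, by omega⟩
      refine (congrArg₂ (· + ·)
        ((Finset.sum_congr rfl fun k _ => ind_congr (hiffL k)).trans
          (sum_ind_range M (x - z.1) _))
        ((Finset.sum_congr rfl fun k _ => ind_congr (hiffU k)).trans
          (sum_ind_range M (x - z.1 - 1) _))).trans ?_
      rw [ind_congr (lamS1 z x y), ind_congr (lamS1 (z.1, z.2 + 1) x y),
        ind_congr (edge_eq_iff x y z.1 (z.2 + 1) 1), ind_false (fun h => h)]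
      rw [zero_add, zero_add]
      unfold ind
      split_ifs <;> first | rfl | decide | (exfalso; omega)
    · have hiffL : ∀ k : ℕ, onFace ((z.1 + (k : ℤ), z.2 + 1), false) ((x, y), (2 : Fin 3))
          ↔ ((k : ℤ) = x - z.1 ∧ y = z.2 + 2) := by
        intro k
        rw [onFaceL2]
        constructor
        · rintro ⟨h1, h2⟩; exact ⟨by omega, by omega⟩
        · rintro ⟨h1, h2⟩; exact ⟨by omega, by omega⟩
      have hiffU : ∀ k : ℕ, onFace ((z.1 + (k : ℤ), z.2 + 1), true) ((x, y), (2 : Fin 3))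
          ↔ ((k : ℤ) = x - z.1 ∧ y = z.2 + 2) := by
        intro k
        rw [onFaceU2]
        constructor
        · rintro ⟨h1, h2⟩; exact ⟨by omega, by omega⟩
        · rintro ⟨h1, h2⟩; exact ⟨by omega, by omega⟩
      refine (congrArg₂ (· + ·)
        ((Finset.sum_congr rfl fun k _ => ind_congr (hiffL k)).trans
          (sum_ind_range M (x - z.1) _))
        ((Finset.sum_congr rfl fun k _ => ind_congr (hiffU k)).trans
          (sum_ind_range M (x - z.1) _))).trans ?_
      rw [ind_congr (lamS2 z x y), ind_congr (lamS2 (z.1, z.2 + 1) x y),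
        ind_false (fun h => h),
        ind_false (edge_ne_dir (x := x) (y := y) (i := 2) (j := 1) (by decide))]
      rw [zero_add, zero_add]
      generalize ind (0 ≤ x - z.1 ∧ x - z.1 < (M : ℤ) ∧ y = z.2 + 2) = a
      revert a; decide
  rw [wsum_congr key, wsum_add, wsum_add] at h0'
  exact z2_cancel h0'

lemma flipV {C : List Edge2} {B : ℤ} (hC : evenFaced C) (hB : Bnd B C) (z : V2) :
    kap C z + kap C (z.1, z.2 + 1) = mem2 C ((z.1, z.2 + 1), 1) := by
  rw [strip1 hC hB z, strip1 hC hB (z.1, z.2 + 1)]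
  exact strip2 hC hB z



/-! ### the potential function and its flip rules -/

noncomputable def mu (C : List Edge2) (v : V2) : ZMod 2 := kap C (v.1, v.2 - 1)

lemma V2eq {a b c d : ℤ} (h1 : a = c) (h2 : b = d) : ((a, b) : V2) = (c, d) := by
  rw [h1, h2]

lemma dmuV {C : List Edge2} {B : ℤ} (hC : evenFaced C) (hB : Bnd B C) (v : V2) :
    mu C v + mu C (v.1, v.2 + 1) = mem2 C ((v.1, v.2), 1) := by
  have h := flipV hC hB (v.1, v.2 - 1)
  simp only at h
  rw [show v.2 - 1 + 1 = v.2 by ring] at h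
  unfold mu
  simp only
  rw [show v.2 + 1 - 1 = v.2 by ring]
  exact h

lemma dmuH {C : List Edge2} {B : ℤ} (hC : evenFaced C) (hB : Bnd B C) (v : V2) :
    mu C v + mu C (v.1 + 1, v.2) = mem2 C ((v.1, v.2), 0) := by
  have h := flipH C (v.1, v.2 - 1)
  simp only at h
  rw [show v.2 - 1 + 1 = v.2 by ring] at h
  have hev : fwt C ((v.1, v.2 - 1), true) = 0 := hC _
  rw [fwt_U] at hev
  simp only at hev
  rw [show v.2 - 1 + 1 = v.2 by ring] at hev
  unfold mu
  simp only
  rw [h]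
  -- goal: mem2 ((v.1+1, v.2-1),1) + mem2 ((v.1,v.2),2) = mem2 ((v.1,v.2),0)
  have := z2_cancel hev
  -- hev : mem2 ((v.1,v.2),0) + mem2 ((v.1+1,v.2-1),1) + mem2 ((v.1,v.2),2) = 0
  revert hev
  generalize mem2 C ((v.1, v.2), 0) = a
  generalize mem2 C ((v.1 + 1, v.2 - 1), 1) = b
  generalize mem2 C ((v.1, v.2), 2) = c
  revert a b c
  decide

lemma dmuD {C : List Edge2} {B : ℤ} (hC : evenFaced C) (hB : Bnd B C) (v : V2) :
    mu C v + mu C (v.1 + 1, v.2 - 1) = mem2 C ((v.1, v.2), 2) := by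
  have h1 := dmuH hC hB v
  have h2 := dmuV hC hB (v.1 + 1, v.2 - 1)
  simp only at h2
  rw [show v.2 - 1 + 1 = v.2 by ring] at h2
  have hev : fwt C ((v.1, v.2 - 1), true) = 0 := hC _
  rw [fwt_U] at hev
  simp only at hev
  rw [show v.2 - 1 + 1 = v.2 by ring] at hev
  revert h1 h2 hev
  generalize mem2 C ((v.1, v.2), 0) = a
  generalize mem2 C ((v.1 + 1, v.2 - 1), 1) = b
  generalize mem2 C ((v.1, v.2), 2) = c
  generalize mu C v = m1
  generalize mu C (v.1 + 1, v.2) = m2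
  generalize mu C (v.1 + 1, v.2 - 1) = m3
  revert a b c m1 m2 m3
  decide

def edgeOf (v w : V2) : Edge2 :=
  if w.1 - v.1 = 1 ∧ w.2 - v.2 = 0 then (v, 0)
  else if w.1 - v.1 = 0 ∧ w.2 - v.2 = 1 then (v, 1)
  else if w.1 - v.1 = 1 ∧ w.2 - v.2 = -1 then (v, 2)
  else if w.1 - v.1 = -1 ∧ w.2 - v.2 = 0 then (w, 0)
  else if w.1 - v.1 = 0 ∧ w.2 - v.2 = -1 then (w, 1)
  else (w, 2)

lemma edgeOf_ends {v w : V2} (hadj : TriLattice.Adj v w) :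
    (eA (edgeOf v w) = v ∧ eB (edgeOf v w) = w) ∨
    (eA (edgeOf v w) = w ∧ eB (edgeOf v w) = v) := by
  unfold edgeOf eA eB
  rcases adj_iff.mp hadj with h | h | h | h | h | h
  · rw [if_pos h]
    exact Or.inl ⟨rfl, by unfold evec; rw [Prod.mk.injEq] at *; constructor <;> simp <;> omega⟩
  · rw [if_neg (by omega), if_neg (by omega), if_neg (by omega), if_pos (by omega)]
    exact Or.inr ⟨rfl, by unfold evec; rw [Prod.mk.injEq] at *; constructor <;> simp <;> omega⟩
  · rw [if_neg (by omega), if_pos (by omega)]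
    exact Or.inl ⟨rfl, by unfold evec; rw [Prod.mk.injEq] at *; constructor <;> simp <;> omega⟩
  · rw [if_neg (by omega), if_neg (by omega), if_neg (by omega), if_neg (by omega),
      if_pos (by omega)]
    exact Or.inr ⟨rfl, by unfold evec; rw [Prod.mk.injEq] at *; constructor <;> simp <;> omega⟩
  · rw [if_neg (by omega), if_neg (by omega), if_pos (by omega)]
    exact Or.inl ⟨rfl, by unfold evec; rw [Prod.mk.injEq] at *; constructor <;> simp <;> omega⟩
  · rw [if_neg (by omega), if_neg (by omega), if_neg (by omega), if_neg (by omega),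
      if_neg (by omega)]
    exact Or.inr ⟨rfl, by unfold evec; rw [Prod.mk.injEq] at *; constructor <;> simp <;> omega⟩

lemma dmu_adj {C : List Edge2} {B : ℤ} (hC : evenFaced C) (hB : Bnd B C) {v w : V2}
    (hadj : TriLattice.Adj v w) :
    mu C v + mu C w = mem2 C (edgeOf v w) := by
  unfold edgeOf
  rcases adj_iff.mp hadj with h | h | h | h | h | h
  · rw [if_pos h, show w = (v.1 + 1, v.2) from V2eq (by omega) (by omega)]
    exact dmuH hC hB v
  · rw [if_neg (by omega), if_neg (by omega), if_neg (by omega), if_pos (by omega),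
      show v = (w.1 + 1, w.2) from V2eq (by omega) (by omega), add_comm]
    exact dmuH hC hB w
  · rw [if_neg (by omega), if_pos (by omega),
      show w = (v.1, v.2 + 1) from V2eq (by omega) (by omega)]
    exact dmuV hC hB v
  · rw [if_neg (by omega), if_neg (by omega), if_neg (by omega), if_neg (by omega),
      if_pos (by omega), show v = (w.1, w.2 + 1) from V2eq (by omega) (by omega), add_comm]
    exact dmuV hC hB w
  · rw [if_neg (by omega), if_neg (by omega), if_pos (by omega),
      show w = (v.1 + 1, v.2 - 1) from V2eq (by omega) (by omega)]
    exact dmuD hC hB v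
  · rw [if_neg (by omega), if_neg (by omega), if_neg (by omega), if_neg (by omega),
      if_neg (by omega), show v = (w.1 + 1, w.2 - 1) from V2eq (by omega) (by omega), add_comm]
    exact dmuD hC hB w

lemma mu_eq_of_zero {C : List Edge2} {B : ℤ} (hC : evenFaced C) (hB : Bnd B C) {v w : V2}
    (hadj : TriLattice.Adj v w) (hz : mem2 C (edgeOf v w) = 0) : mu C v = mu C w := by
  have := dmu_adj hC hB hadj
  rw [hz] at this
  exact z2_cancel this

lemma mu_chain {C : List Edge2} {B : ℤ} (hC : evenFaced C) (hB : Bnd B C) :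
    ∀ (l : List V2), l.Chain' (fun a b => TriLattice.Adj a b ∧ mem2 C (edgeOf a b) = 0) →
    ∀ a b, l.head? = some a → l.getLast? = some b → mu C a = mu C b := by
  intro l
  induction l with
  | nil => intro _ a b ha hb; simp at ha
  | cons x t ih =>
    intro hch a b ha hb
    cases t with
    | nil =>
      simp at ha hb
      rw [← ha, ← hb]
    | cons y s =>
      have hrel := List.isChain_cons_cons.mp hch
      have hx : mu C x = mu C y := mu_eq_of_zero hC hB hrel.1.1 hrel.1.2
      simp only [List.head?_cons, Option.some.injEq] at ha
      rw [← ha, hx]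
      refine ih hrel.2 y b rfl ?_
      rw [← hb, List.getLast?_cons_cons]

/-! ### explicit straight paths -/

def rightL (v : V2) : ℕ → List V2
  | 0 => [v]
  | k + 1 => v :: rightL (v.1 + 1, v.2) k

lemma rightL_head (v : V2) (k : ℕ) : (rightL v k).head? = some v := by
  cases k <;> rfl

lemma rightL_last (v : V2) (k : ℕ) : (rightL v k).getLast? = some (v.1 + k, v.2) := by
  induction k generalizing v with
  | zero => simp [rightL]
  | succ k ih =>
    show (v :: rightL (v.1 + 1, v.2) k).getLast? = _
    cases hk : rightL (v.1 + 1, v.2) k with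
    | nil => exact absurd hk (by cases k <;> simp [rightL])
    | cons z s =>
      rw [List.getLast?_cons_cons]
      rw [← hk, ih]
      exact congrArg some (V2eq (by push_cast; ring) rfl)

lemma rightL_chain (R : V2 → V2 → Prop) (k : ℕ) (v : V2)
    (h : ∀ w : V2, w.2 = v.2 → v.1 ≤ w.1 → w.1 < v.1 + k → R w (w.1 + 1, w.2)) :
    (rightL v k).Chain' R := by
  induction k generalizing v with
  | zero => exact List.isChain_singleton v
  | succ k ih =>
    show List.IsChain R (v :: rightL (v.1 + 1, v.2) k)
    rw [List.isChain_cons]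
    constructor
    · intro y hy
      rw [rightL_head] at hy
      have : y = (v.1 + 1, v.2) := by injection hy with h'; rw [← h']
      rw [this]
      have := h v rfl le_rfl (by omega)
      exact (show R v ((v.1 + 1, v.2) : V2) from this)
    · refine ih (v.1 + 1, v.2) (fun w hw1 hw2 hw3 => ?_)
      exact h w (by simpa using hw1) (by simp at hw2 ⊢; omega) (by simp at hw3 ⊢; omega)

def downL (v : V2) : ℕ → List V2
  | 0 => [v]
  | k + 1 => v :: downL (v.1, v.2 - 1) k

lemma downL_head (v : V2) (k : ℕ) : (downL v k).head? = some v := by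
  cases k <;> rfl

lemma downL_last (v : V2) (k : ℕ) : (downL v k).getLast? = some (v.1, v.2 - k) := by
  induction k generalizing v with
  | zero => simp [downL]
  | succ k ih =>
    show (v :: downL (v.1, v.2 - 1) k).getLast? = _
    cases hk : downL (v.1, v.2 - 1) k with
    | nil => exact absurd hk (by cases k <;> simp [downL])
    | cons z s =>
      rw [List.getLast?_cons_cons]
      rw [← hk, ih]
      exact congrArg some (V2eq rfl (by push_cast; ring))

lemma downL_chain (R : V2 → V2 → Prop) (k : ℕ) (v : V2)
    (h : ∀ w : V2, w.1 = v.1 → v.2 - k < w.2 → w.2 ≤ v.2 → R w (w.1, w.2 - 1)) :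
    (downL v k).Chain' R := by
  induction k generalizing v with
  | zero => exact List.isChain_singleton v
  | succ k ih =>
    show List.IsChain R (v :: downL (v.1, v.2 - 1) k)
    rw [List.isChain_cons]
    constructor
    · intro y hy
      rw [downL_head] at hy
      have : y = (v.1, v.2 - 1) := by injection hy with h'; rw [← h']
      rw [this]
      exact h v rfl (by omega) le_rfl
    · refine ih (v.1, v.2 - 1) (fun w hw1 hw2 hw3 => ?_)
      exact h w (by simpa using hw1) (by simp at hw2 ⊢; omega) (by simp at hw3 ⊢; omega)



/-! ### faces of an edge -/

def fL (e : Edge2) : Face :=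
  if e.2 = 2 then ((e.1.1, e.1.2 - 1), false) else (e.1, false)

def fU (e : Edge2) : Face :=
  if e.2 = 0 then ((e.1.1, e.1.2 - 1), true)
  else if e.2 = 1 then ((e.1.1 - 1, e.1.2), true)
  else ((e.1.1, e.1.2 - 1), true)

lemma face_eq_iff (w : V2) (a b : ℤ) (bb : Bool) :
    ((w, bb) : Face) = ((a, b), bb) ↔ (w.1 = a ∧ w.2 = b) := by
  rw [Prod.mk.injEq, Prod.mk.injEq]
  constructor
  · rintro ⟨⟨h1, h2⟩, -⟩; exact ⟨h1, h2⟩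
  · rintro ⟨h1, h2⟩; exact ⟨⟨h1, h2⟩, rfl⟩

lemma face_ne_bool {w z : V2} {b1 b2 : Bool} (h : b1 ≠ b2) : ((w, b1) : Face) ≠ (z, b2) := by
  intro he
  rw [Prod.mk.injEq] at he
  exact h he.2

lemma onFace_iff (f : Face) (e : Edge2) : onFace f e ↔ f = fL e ∨ f = fU e := by
  obtain ⟨w, bb⟩ := f
  obtain ⟨⟨x, y⟩, d⟩ := e
  rcases fin3_tri d with rfl | rfl | rfl <;> cases bb
  · rw [onFaceL0]
    unfold fL fU
    rw [if_neg (show ¬ (0 : Fin 3) = 2 by decide), if_pos rfl]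
    simp only
    constructor
    · rintro ⟨h1, h2⟩; exact Or.inl ((face_eq_iff _ _ _ _).mpr ⟨by omega, by omega⟩)
    · rintro (h | h)
      · rw [face_eq_iff] at h; exact ⟨by omega, by omega⟩
      · exact absurd h (face_ne_bool (by decide))
  · rw [onFaceU0]
    unfold fL fU
    rw [if_neg (show ¬ (0 : Fin 3) = 2 by decide), if_pos rfl]
    simp only
    constructor
    · rintro ⟨h1, h2⟩; exact Or.inr ((face_eq_iff _ _ _ _).mpr ⟨by omega, by omega⟩)
    · rintro (h | h)
      · exact absurd h (face_ne_bool (by decide))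
      · rw [face_eq_iff] at h; exact ⟨by omega, by omega⟩
  · rw [onFaceL1]
    unfold fL fU
    rw [if_neg (show ¬ (1 : Fin 3) = 2 by decide), if_neg (show ¬ (1 : Fin 3) = 0 by decide),
      if_pos rfl]
    simp only
    constructor
    · rintro ⟨h1, h2⟩; exact Or.inl ((face_eq_iff _ _ _ _).mpr ⟨by omega, by omega⟩)
    · rintro (h | h)
      · rw [face_eq_iff] at h; exact ⟨by omega, by omega⟩
      · exact absurd h (face_ne_bool (by decide))
  · rw [onFaceU1]
    unfold fL fU
    rw [if_neg (show ¬ (1 : Fin 3) = 2 by decide), if_neg (show ¬ (1 : Fin 3) = 0 by decide),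
      if_pos rfl]
    simp only
    constructor
    · rintro ⟨h1, h2⟩; exact Or.inr ((face_eq_iff _ _ _ _).mpr ⟨by omega, by omega⟩)
    · rintro (h | h)
      · exact absurd h (face_ne_bool (by decide))
      · rw [face_eq_iff] at h; exact ⟨by omega, by omega⟩
  · rw [onFaceL2]
    unfold fL fU
    rw [if_pos rfl, if_neg (show ¬ (2 : Fin 3) = 0 by decide),
      if_neg (show ¬ (2 : Fin 3) = 1 by decide)]
    simp only
    constructor
    · rintro ⟨h1, h2⟩; exact Or.inl ((face_eq_iff _ _ _ _).mpr ⟨by omega, by omega⟩)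
    · rintro (h | h)
      · rw [face_eq_iff] at h; exact ⟨by omega, by omega⟩
      · exact absurd h (face_ne_bool (by decide))
  · rw [onFaceU2]
    unfold fL fU
    rw [if_pos rfl, if_neg (show ¬ (2 : Fin 3) = 0 by decide),
      if_neg (show ¬ (2 : Fin 3) = 1 by decide)]
    simp only
    constructor
    · rintro ⟨h1, h2⟩; exact Or.inr ((face_eq_iff _ _ _ _).mpr ⟨by omega, by omega⟩)
    · rintro (h | h)
      · exact absurd h (face_ne_bool (by decide))
      · rw [face_eq_iff] at h; exact ⟨by omega, by omega⟩

lemma fL_ne_fU (e : Edge2) : fL e ≠ fU e := by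
  unfold fL fU
  split_ifs <;> exact face_ne_bool (by decide)

lemma ind_or2 {p q : Prop} (hpq : p → q → False) : ind (p ∨ q) = ind p + ind q := by
  unfold ind
  split_ifs <;> first | rfl | decide | tauto

lemma ind_add_self (p : Prop) : ind p + ind p = 0 := by
  unfold ind; split_ifs <;> decide

lemma sum_ind_mem (s : Finset Face) (a : Face) : ∑ f ∈ s, ind (f = a) = ind (a ∈ s) := by
  classical
  induction s using Finset.induction_on with
  | empty =>
    simp only [Finset.sum_empty]
    exact (ind_false (by simp)).symm
  | insert _ _ hni ih =>
    rename_i x s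
    rw [Finset.sum_insert hni, ih]
    by_cases h : x = a
    · subst h
      rw [ind_true rfl, ind_false (fun hx : x ∈ s => hni hx),
        ind_true (Finset.mem_insert_self x s), add_zero]
    · rw [ind_false h, zero_add]
      refine ind_congr ?_
      rw [Finset.mem_insert]
      constructor
      · intro hx; exact Or.inr hx
      · rintro (hx | hx)
        · exact absurd hx.symm h
        · exact hx

lemma sum_ind_list (l : List Face) (hnd : l.Nodup) (a : Face) :
    (l.map (fun f => ind (a = f))).sum = ind (a ∈ l) := by
  induction l with
  | nil =>
    simp only [List.map_nil, List.sum_nil]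
    exact (ind_false (by simp)).symm
  | cons x t ih =>
    simp only [List.map_cons, List.sum_cons]
    rw [ih (List.nodup_cons.mp hnd).2]
    by_cases h : a = x
    · subst h
      rw [ind_true rfl, ind_false (List.nodup_cons.mp hnd).1, ind_true (by simp), add_zero]
    · rw [ind_false h, zero_add]
      exact ind_congr (by simp [h])

lemma sum_const_list {α : Type*} (l : List α) (c : ZMod 2) :
    (l.map (fun _ => c)).sum = (l.length : ZMod 2) * c := by
  induction l with
  | nil => simp
  | cons x t ih =>
    simp only [List.map_cons, List.sum_cons, List.length_cons, ih]
    push_cast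
    ring

/-! ### partition basics -/

section Partition

variable {n : ℕ} (σ : TriPartition n)

lemma P_subset_T (i : Fin 3) : σ.P i ⊆ Tset n := by
  rw [← σ.cover]
  exact Set.subset_iUnion σ.P i

lemma T_mem_cases {v : V2} (hv : v ∈ Tset n) : v ∈ σ.P 0 ∨ v ∈ σ.P 1 ∨ v ∈ σ.P 2 := by
  rw [← σ.cover] at hv
  obtain ⟨s, ⟨i, rfl⟩, hs⟩ := hv
  rcases fin3_tri i with rfl | rfl | rfl
  · exact Or.inl hs
  · exact Or.inr (Or.inl hs)
  · exact Or.inr (Or.inr hs)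

lemma cls (v : V2) : v ∈ σ.P 0 ∨ v ∈ σ.P 1 ∨ v ∈ σ.P 2 ∨ v ∉ Tset n := by
  by_cases h : v ∈ Tset n
  · rcases T_mem_cases σ h with h' | h' | h'
    · exact Or.inl h'
    · exact Or.inr (Or.inl h')
    · exact Or.inr (Or.inr (Or.inl h'))
  · exact Or.inr (Or.inr (Or.inr h))

lemma P_disj {v : V2} {i j : Fin 3} (hne : i ≠ j) (h1 : v ∈ σ.P i) (h2 : v ∈ σ.P j) : False :=
  Set.disjoint_left.mp (σ.disj i j hne) h1 h2

lemma Tset_finite : (Tset n).Finite := by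
  refine Set.Finite.subset ((Set.finite_Icc (1 : ℤ) n).prod (Set.finite_Icc (1 - (n : ℤ)) 0)) ?_
  rintro ⟨x, y⟩ ⟨h1, h2, h3, h4⟩
  exact ⟨⟨h1, h2⟩, by constructor <;> simp at * <;> omega⟩

lemma P_finite (i : Fin 3) : (σ.P i).Finite := (Tset_finite).subset (P_subset_T σ i)

/-- the interface predicate between `P 1` and `P 2` -/
def ItfP (e : Edge2) : Prop :=
  (eA e ∈ σ.P 1 ∧ eB e ∈ σ.P 2) ∨ (eA e ∈ σ.P 2 ∧ eB e ∈ σ.P 1)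

lemma Itf_finite : {e : Edge2 | ItfP σ e}.Finite := by
  refine Set.Finite.subset (((P_finite σ 1).union (P_finite σ 2)).prod (Set.finite_univ)) ?_
  rintro ⟨b, d⟩ (⟨h1, -⟩ | ⟨h1, -⟩)
  · exact ⟨Or.inl h1, trivial⟩
  · exact ⟨Or.inr h1, trivial⟩

noncomputable def IL : List Edge2 := (Itf_finite σ).toFinset.toList

lemma mem_IL {e : Edge2} : e ∈ IL σ ↔ ItfP σ e := by
  unfold IL
  rw [Finset.mem_toList, Set.Finite.mem_toFinset]
  rfl

lemma mem2_eq_zero {l : List Edge2} {e : Edge2} (h : ∀ e' ∈ l, e' ≠ e) : mem2 l e = 0 :=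
  wsum_zero (fun e' he' => ind_false (h e' he'))

lemma mem2_nodup {l : List Edge2} (hnd : l.Nodup) (e : Edge2) : mem2 l e = ind (e ∈ l) := by
  induction l with
  | nil =>
    rw [mem2_eq_zero (by simp)]
    exact (ind_false (by simp)).symm
  | cons x t ih =>
    unfold mem2 wsum
    simp only [List.map_cons, List.sum_cons]
    have h2 : (List.map (fun e' => ind (e' = e)) t).sum = mem2 t e := rfl
    rw [h2, ih (List.nodup_cons.mp hnd).2]
    by_cases h : x = e
    · subst h
      rw [ind_true rfl, ind_false (List.nodup_cons.mp hnd).1, ind_true (by simp), add_zero]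
    · rw [ind_false h, zero_add]
      refine ind_congr ?_
      rw [List.mem_cons]
      constructor
      · intro hx; exact Or.inr hx
      · rintro (hx | hx)
        · exact absurd hx.symm h
        · exact hx

lemma mem2_IL (e : Edge2) : mem2 (IL σ) e = ind (ItfP σ e) := by
  refine (mem2_nodup ?_ e).trans (ind_congr (mem_IL σ))
  exact Finset.nodup_toList _

/-- the box of faces that can carry interface edges -/
noncomputable def FBox : Finset Face :=
  ((Finset.Icc (0 : ℤ) n) ×ˢ (Finset.Icc (-(n : ℤ) - 1) 1)) ×ˢ (Finset.univ : Finset Bool)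

lemma mem_FBox {f : Face} :
    f ∈ FBox (n := n) ↔ 0 ≤ f.1.1 ∧ f.1.1 ≤ n ∧ -(n : ℤ) - 1 ≤ f.1.2 ∧ f.1.2 ≤ 1 := by
  unfold FBox
  rw [Finset.mem_product, Finset.mem_product, Finset.mem_Icc, Finset.mem_Icc]
  constructor
  · rintro ⟨⟨⟨h1, h2⟩, h3, h4⟩, -⟩; exact ⟨h1, h2, h3, h4⟩
  · rintro ⟨h1, h2, h3, h4⟩; exact ⟨⟨⟨h1, h2⟩, h3, h4⟩, Finset.mem_univ _⟩

lemma IL_base_T {e : Edge2} (he : e ∈ IL σ) : e.1 ∈ Tset n := by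
  rcases (mem_IL σ).mp he with ⟨h1, -⟩ | ⟨h1, -⟩
  · exact P_subset_T σ 1 h1
  · exact P_subset_T σ 2 h1

lemma IL_faces_in_box {e : Edge2} (he : e ∈ IL σ) :
    fL e ∈ FBox (n := n) ∧ fU e ∈ FBox (n := n) := by
  obtain ⟨hx1, hx2, hy1, hy2⟩ := IL_base_T σ he
  unfold fL fU
  constructor <;> rw [mem_FBox] <;> split_ifs <;> dsimp only <;>
    exact ⟨by omega, by omega, by omega, by omega⟩

lemma odd_count_even : ((FBox (n := n)).filter (fun f => fwt (IL σ) f = 1)).card % 2 = 0 := by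
  classical
  have h0 : ∑ f ∈ FBox (n := n), fwt (IL σ) f = 0 := by
    unfold fwt
    rw [wsum_sum]
    refine wsum_zero (fun e he => ?_)
    have : (∑ f ∈ FBox (n := n), ind (onFace f e))
        = ∑ f ∈ FBox (n := n), (ind (f = fL e) + ind (f = fU e)) := by
      refine Finset.sum_congr rfl (fun f _ => ?_)
      rw [ind_congr (onFace_iff f e), ind_or2]
      rintro rfl h
      exact fL_ne_fU e h
    rw [this, Finset.sum_add_distrib, sum_ind_mem, sum_ind_mem,
      ind_true (IL_faces_in_box σ he).1, ind_true (IL_faces_in_box σ he).2]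
    decide
  have hsplit := Finset.sum_filter_add_sum_filter_not (FBox (n := n))
    (fun f => fwt (IL σ) f = 1) (fun f => fwt (IL σ) f)
  rw [h0] at hsplit
  have h1 : ∑ f ∈ (FBox (n := n)).filter (fun f => fwt (IL σ) f = 1), fwt (IL σ) f
      = (((FBox (n := n)).filter (fun f => fwt (IL σ) f = 1)).card : ZMod 2) := by
    rw [Finset.sum_congr rfl (fun f hf => (Finset.mem_filter.mp hf).2)]
    simp [Finset.sum_const, Nat.smul_one_eq_cast]
  have h2 : ∑ f ∈ (FBox (n := n)).filter (fun f => ¬ fwt (IL σ) f = 1), fwt (IL σ) f = 0 := by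
    refine Finset.sum_eq_zero (fun f hf => ?_)
    have := (Finset.mem_filter.mp hf).2
    have hcases : ∀ a : ZMod 2, a = 0 ∨ a = 1 := by decide
    rcases hcases (fwt (IL σ) f) with h | h
    · exact h
    · exact absurd h this
  rw [h1, h2, add_zero] at hsplit
  have := (ZMod.natCast_eq_zero_iff _ 2).mp hsplit
  omega

end Partition



/-! ### pivot rings around a vertex -/

lemma V2add (a b c d : ℤ) : ((a, b) : V2) + (c, d) = (a + c, b + d) := rfl

lemma fwt_nil (g : Face) : fwt [] g = 0 := rfl

lemma fwt_cons (e : Edge2) (l : List Edge2) (g : Face) :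
    fwt (e :: l) g = ind (onFace g e) + fwt l g := by
  unfold fwt wsum
  simp

lemma fwt_append (l1 l2 : List Edge2) (g : Face) :
    fwt (l1 ++ l2) g = fwt l1 g + fwt l2 g := wsum_append _

lemma fL0 (a b : ℤ) : fL ((a, b), 0) = ((a, b), false) := by
  unfold fL; rw [if_neg (show ¬ (0 : Fin 3) = 2 by decide)]

lemma fL1 (a b : ℤ) : fL ((a, b), 1) = ((a, b), false) := by
  unfold fL; rw [if_neg (show ¬ (1 : Fin 3) = 2 by decide)]

lemma fL2 (a b : ℤ) : fL ((a, b), 2) = ((a, b - 1), false) := by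
  unfold fL; rw [if_pos rfl]

lemma fU0 (a b : ℤ) : fU ((a, b), 0) = ((a, b - 1), true) := by
  unfold fU; rw [if_pos rfl]

lemma fU1 (a b : ℤ) : fU ((a, b), 1) = ((a - 1, b), true) := by
  unfold fU
  rw [if_neg (show ¬ (1 : Fin 3) = 0 by decide), if_pos rfl]

lemma fU2 (a b : ℤ) : fU ((a, b), 2) = ((a, b - 1), true) := by
  unfold fU
  rw [if_neg (show ¬ (2 : Fin 3) = 0 by decide), if_neg (show ¬ (2 : Fin 3) = 1 by decide)]

lemma onFace_expand (g : Face) (e : Edge2) :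
    ind (onFace g e) = ind (g = fL e) + ind (g = fU e) := by
  rw [ind_congr (onFace_iff g e), ind_or2]
  rintro rfl h
  exact fL_ne_fU e h

def fanL (v : V2) : List Edge2 :=
  [((v.1, v.2), 1), ((v.1 - 1, v.2 + 1), 2), ((v.1 - 1, v.2), 0),
   ((v.1, v.2 - 1), 1), ((v.1, v.2), 2), ((v.1, v.2), 0)]

def ringTo (v : V2) (f : Face) : List Edge2 :=
  if f = ((v.1, v.2), false) then []
  else if f = ((v.1 - 1, v.2), true) then (fanL v).take 1
  else if f = ((v.1 - 1, v.2), false) then (fanL v).take 2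
  else if f = ((v.1 - 1, v.2 - 1), true) then (fanL v).take 3
  else if f = ((v.1, v.2 - 1), false) then (fanL v).take 4
  else if f = ((v.1, v.2 - 1), true) then (fanL v).take 5
  else []

def cornF : Face → List V2
  | (z, false) => [z, (z.1 + 1, z.2), (z.1, z.2 + 1)]
  | (z, true) => [(z.1 + 1, z.2), (z.1, z.2 + 1), (z.1 + 1, z.2 + 1)]

def hasC (v : V2) (f : Face) : Prop := v ∈ cornF f

lemma hasC_false_iff (v : V2) (a b : ℤ) : hasC v ((a, b), false) ↔
    (v.1 = a ∧ v.2 = b) ∨ (v.1 = a + 1 ∧ v.2 = b) ∨ (v.1 = a ∧ v.2 = b + 1) := by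
  show v ∈ ([(a, b), (a + 1, b), (a, b + 1)] : List V2) ↔ _
  simp [Prod.ext_iff]

lemma hasC_true_iff (v : V2) (a b : ℤ) : hasC v ((a, b), true) ↔
    (v.1 = a + 1 ∧ v.2 = b) ∨ (v.1 = a ∧ v.2 = b + 1) ∨ (v.1 = a + 1 ∧ v.2 = b + 1) := by
  show v ∈ ([(a + 1, b), (a, b + 1), (a + 1, b + 1)] : List V2) ↔ _
  simp [Prod.ext_iff]

lemma hasC_cases {v : V2} {f : Face} (h : hasC v f) :
    f = ((v.1, v.2), false) ∨ f = ((v.1 - 1, v.2), true) ∨ f = ((v.1 - 1, v.2), false) ∨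
    f = ((v.1 - 1, v.2 - 1), true) ∨ f = ((v.1, v.2 - 1), false) ∨
    f = ((v.1, v.2 - 1), true) := by
  obtain ⟨⟨a, b⟩, bb⟩ := f
  cases bb
  · rw [hasC_false_iff] at h
    rcases h with ⟨h1, h2⟩ | ⟨h1, h2⟩ | ⟨h1, h2⟩
    · exact Or.inl ((face_eq_iff _ _ _ _).mpr ⟨by omega, by omega⟩)
    · exact Or.inr (Or.inr (Or.inl ((face_eq_iff _ _ _ _).mpr ⟨by omega, by omega⟩)))
    · exact Or.inr (Or.inr (Or.inr (Or.inr (Or.inl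
        ((face_eq_iff _ _ _ _).mpr ⟨by omega, by omega⟩)))))
  · rw [hasC_true_iff] at h
    rcases h with ⟨h1, h2⟩ | ⟨h1, h2⟩ | ⟨h1, h2⟩
    · exact Or.inr (Or.inl ((face_eq_iff _ _ _ _).mpr ⟨by omega, by omega⟩))
    · exact Or.inr (Or.inr (Or.inr (Or.inr (Or.inr
        ((face_eq_iff _ _ _ _).mpr ⟨by omega, by omega⟩)))))
    · exact Or.inr (Or.inr (Or.inr (Or.inl ((face_eq_iff _ _ _ _).mpr ⟨by omega, by omega⟩))))

lemma ringTo_fwt (v : V2) (f : Face) (h : hasC v f) (g : Face) :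
    fwt (ringTo v f) g = ind (g = ((v.1, v.2), false)) + ind (g = f) := by
  have hnorm1 : v.2 + 1 - 1 = v.2 := by ring
  rcases hasC_cases h with rfl | rfl | rfl | rfl | rfl | rfl
  · rw [show ringTo v ((v.1, v.2), false) = [] from if_pos rfl, fwt_nil]
    exact (ind_add_self _).symm
  · rw [show ringTo v ((v.1 - 1, v.2), true) = (fanL v).take 1 by
      unfold ringTo
      rw [if_neg (face_ne_bool (by decide)), if_pos rfl]]
    unfold fanL
    rw [show ([((v.1, v.2), 1), ((v.1 - 1, v.2 + 1), 2), ((v.1 - 1, v.2), 0),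
        ((v.1, v.2 - 1), 1), ((v.1, v.2), 2), ((v.1, v.2), 0)] : List Edge2).take 1
        = [((v.1, v.2), 1)] from rfl]
    rw [fwt_cons, fwt_nil, add_zero, onFace_expand, fL1, fU1]
  · rw [show ringTo v ((v.1 - 1, v.2), false) = (fanL v).take 2 by
      unfold ringTo
      rw [if_neg, if_neg (face_ne_bool (by decide)), if_pos rfl]
      · rw [face_eq_iff]; omega]
    unfold fanL
    rw [show ([((v.1, v.2), 1), ((v.1 - 1, v.2 + 1), 2), ((v.1 - 1, v.2), 0),
        ((v.1, v.2 - 1), 1), ((v.1, v.2), 2), ((v.1, v.2), 0)] : List Edge2).take 2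
        = [((v.1, v.2), 1), ((v.1 - 1, v.2 + 1), 2)] from rfl]
    rw [fwt_cons, fwt_cons, fwt_nil, add_zero, onFace_expand, onFace_expand,
      fL1, fU1, fL2, fU2, hnorm1]
    generalize ind (g = ((v.1, v.2), false)) = a
    generalize ind (g = ((v.1 - 1, v.2), true)) = b
    generalize ind (g = ((v.1 - 1, v.2), false)) = c
    revert a b c; decide
  · rw [show ringTo v ((v.1 - 1, v.2 - 1), true) = (fanL v).take 3 by
      unfold ringTo
      rw [if_neg (face_ne_bool (by decide)), if_neg, if_neg (face_ne_bool (by decide)),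
        if_pos rfl]
      · rw [face_eq_iff]; omega]
    unfold fanL
    rw [show ([((v.1, v.2), 1), ((v.1 - 1, v.2 + 1), 2), ((v.1 - 1, v.2), 0),
        ((v.1, v.2 - 1), 1), ((v.1, v.2), 2), ((v.1, v.2), 0)] : List Edge2).take 3
        = [((v.1, v.2), 1), ((v.1 - 1, v.2 + 1), 2), ((v.1 - 1, v.2), 0)] from rfl]
    rw [fwt_cons, fwt_cons, fwt_cons, fwt_nil, add_zero, onFace_expand, onFace_expand,
      onFace_expand, fL1, fU1, fL2, fU2, fL0, fU0, hnorm1]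
    generalize ind (g = ((v.1, v.2), false)) = a
    generalize ind (g = ((v.1 - 1, v.2), true)) = b
    generalize ind (g = ((v.1 - 1, v.2), false)) = c
    generalize ind (g = ((v.1 - 1, v.2 - 1), true)) = d
    revert a b c d; decide
  · rw [show ringTo v ((v.1, v.2 - 1), false) = (fanL v).take 4 by
      unfold ringTo
      rw [if_neg, if_neg (face_ne_bool (by decide)), if_neg, if_neg (face_ne_bool (by decide)),
        if_pos rfl]
      · rw [face_eq_iff]; omega
      · rw [face_eq_iff]; omega]
    unfold fanL
    rw [show ([((v.1, v.2), 1), ((v.1 - 1, v.2 + 1), 2), ((v.1 - 1, v.2), 0),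
        ((v.1, v.2 - 1), 1), ((v.1, v.2), 2), ((v.1, v.2), 0)] : List Edge2).take 4
        = [((v.1, v.2), 1), ((v.1 - 1, v.2 + 1), 2), ((v.1 - 1, v.2), 0),
           ((v.1, v.2 - 1), 1)] from rfl]
    rw [fwt_cons, fwt_cons, fwt_cons, fwt_cons, fwt_nil, add_zero, onFace_expand,
      onFace_expand, onFace_expand, onFace_expand, fL1, fU1, fL2, fU2, fL0, fU0, fL1, fU1,
      hnorm1]
    generalize ind (g = ((v.1, v.2), false)) = a
    generalize ind (g = ((v.1 - 1, v.2), true)) = b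
    generalize ind (g = ((v.1 - 1, v.2), false)) = c
    generalize ind (g = ((v.1 - 1, v.2 - 1), true)) = d
    generalize ind (g = ((v.1, v.2 - 1), false)) = e
    revert a b c d e; decide
  · rw [show ringTo v ((v.1, v.2 - 1), true) = (fanL v).take 5 by
      unfold ringTo
      rw [if_neg (face_ne_bool (by decide)), if_neg, if_neg (face_ne_bool (by decide)),
        if_neg, if_neg (face_ne_bool (by decide)), if_pos rfl]
      · rw [face_eq_iff]; omega
      · rw [face_eq_iff]; omega]
    unfold fanL
    rw [show ([((v.1, v.2), 1), ((v.1 - 1, v.2 + 1), 2), ((v.1 - 1, v.2), 0),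
        ((v.1, v.2 - 1), 1), ((v.1, v.2), 2), ((v.1, v.2), 0)] : List Edge2).take 5
        = [((v.1, v.2), 1), ((v.1 - 1, v.2 + 1), 2), ((v.1 - 1, v.2), 0),
           ((v.1, v.2 - 1), 1), ((v.1, v.2), 2)] from rfl]
    rw [fwt_cons, fwt_cons, fwt_cons, fwt_cons, fwt_cons, fwt_nil, add_zero, onFace_expand,
      onFace_expand, onFace_expand, onFace_expand, onFace_expand,
      fL1, fU1, fL2, fU2, fL0, fU0, fL1, fU1, fL2, fU2, hnorm1]
    generalize ind (g = ((v.1, v.2), false)) = a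
    generalize ind (g = ((v.1 - 1, v.2), true)) = b
    generalize ind (g = ((v.1 - 1, v.2), false)) = c
    generalize ind (g = ((v.1 - 1, v.2 - 1), true)) = d
    generalize ind (g = ((v.1, v.2 - 1), false)) = e
    generalize ind (g = ((v.1, v.2 - 1), true)) = k
    revert a b c d e k; decide

lemma fanL_incident (v : V2) : ∀ e ∈ fanL v, eA e = v ∨ eB e = v := by
  intro e he
  unfold fanL at he
  simp only [List.mem_cons, List.not_mem_nil, or_false] at he
  rcases he with rfl | rfl | rfl | rfl | rfl | rfl
  · exact Or.inl (by unfold eA; exact Prod.mk.eta)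
  · refine Or.inr ?_
    unfold eB evec
    rw [V2add, show v.1 - 1 + 1 = v.1 by ring, show v.2 + 1 + -1 = v.2 by ring]
  · refine Or.inr ?_
    unfold eB evec
    rw [V2add, show v.1 - 1 + 1 = v.1 by ring, show v.2 + 0 = v.2 by ring]
  · refine Or.inr ?_
    unfold eB evec
    rw [V2add, show v.2 - 1 + 1 = v.2 by ring, show v.1 + 0 = v.1 by ring]
  · exact Or.inl (by unfold eA; exact Prod.mk.eta)
  · exact Or.inl (by unfold eA; exact Prod.mk.eta)

lemma ringTo_incident (v : V2) (f : Face) : ∀ e ∈ ringTo v f, eA e = v ∨ eB e = v := by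
  intro e he
  refine fanL_incident v e ?_
  unfold ringTo at he
  split_ifs at he <;> first
    | exact absurd he List.not_mem_nil
    | exact List.take_subset _ _ he


/-! ### bridges and cap chains -/

def bridge (v w : V2) : Face :=
  if w.1 - v.1 = 1 ∧ w.2 - v.2 = 0 then ((v.1, v.2), false)
  else if w.1 - v.1 = 0 ∧ w.2 - v.2 = 1 then ((v.1, v.2), false)
  else if w.1 - v.1 = 1 ∧ w.2 - v.2 = -1 then ((v.1, v.2 - 1), true)
  else if w.1 - v.1 = -1 ∧ w.2 - v.2 = 0 then ((w.1, w.2), false)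
  else if w.1 - v.1 = 0 ∧ w.2 - v.2 = -1 then ((w.1, w.2), false)
  else ((w.1, w.2 - 1), true)

lemma bridge_hasC {v w : V2} (hadj : TriLattice.Adj v w) :
    hasC v (bridge v w) ∧ hasC w (bridge v w) := by
  unfold bridge
  rcases adj_iff.mp hadj with h | h | h | h | h | h
  · rw [if_pos h]
    rw [hasC_false_iff, hasC_false_iff]
    exact ⟨Or.inl ⟨rfl, rfl⟩, Or.inr (Or.inl ⟨by omega, by omega⟩)⟩
  · rw [if_neg (by omega), if_neg (by omega), if_neg (by omega), if_pos (by omega)]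
    rw [hasC_false_iff, hasC_false_iff]
    exact ⟨Or.inr (Or.inl ⟨by omega, by omega⟩), Or.inl ⟨rfl, rfl⟩⟩
  · rw [if_neg (by omega), if_pos (by omega)]
    rw [hasC_false_iff, hasC_false_iff]
    exact ⟨Or.inl ⟨rfl, rfl⟩, Or.inr (Or.inr ⟨by omega, by omega⟩)⟩
  · rw [if_neg (by omega), if_neg (by omega), if_neg (by omega), if_neg (by omega),
      if_pos (by omega)]
    rw [hasC_false_iff, hasC_false_iff]
    exact ⟨Or.inr (Or.inr ⟨by omega, by omega⟩), Or.inl ⟨rfl, rfl⟩⟩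
  · rw [if_neg (by omega), if_neg (by omega), if_pos (by omega)]
    rw [hasC_true_iff, hasC_true_iff]
    exact ⟨Or.inr (Or.inl ⟨by omega, by omega⟩), Or.inl ⟨by omega, by omega⟩⟩
  · rw [if_neg (by omega), if_neg (by omega), if_neg (by omega), if_neg (by omega),
      if_neg (by omega)]
    rw [hasC_true_iff, hasC_true_iff]
    exact ⟨Or.inl ⟨by omega, by omega⟩, Or.inr (Or.inl ⟨by omega, by omega⟩)⟩

def capW : Face → List V2 → Face → List Edge2
  | _, [], _ => []
  | f, [v], g => ringTo v f ++ ringTo v g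
  | f, v :: w :: rest, g => (ringTo v f ++ ringTo v (bridge v w)) ++ capW (bridge v w) (w :: rest) g

lemma capW_fwt : ∀ (l : List V2) (f g : Face) (a b : V2),
    l.Chain' TriLattice.Adj → l.head? = some a → l.getLast? = some b →
    hasC a f → hasC b g →
    ∀ h, fwt (capW f l g) h = ind (h = f) + ind (h = g) := by
  intro l
  induction l with
  | nil => intro f g a b _ ha _ _ _ _; simp at ha
  | cons v rest ih =>
    intro f g a b hch ha hb haf hbg h
    simp only [List.head?_cons, Option.some.injEq] at ha
    subst ha
    cases rest with
    | nil =>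
      simp only [List.getLast?_singleton, Option.some.injEq] at hb
      subst hb
      show fwt (ringTo v f ++ ringTo v g) h = _
      rw [fwt_append, ringTo_fwt v f haf, ringTo_fwt v g hbg]
      generalize ind (h = ((v.1, v.2), false)) = p
      generalize ind (h = f) = q
      generalize ind (h = g) = r
      revert p q r; decide
    | cons w rest' =>
      have hadj : TriLattice.Adj v w := (List.isChain_cons_cons.mp hch).1
      have hbr := bridge_hasC hadj
      show fwt ((ringTo v f ++ ringTo v (bridge v w)) ++ capW (bridge v w) (w :: rest') g) h = _
      rw [fwt_append, fwt_append, ringTo_fwt v f haf, ringTo_fwt v (bridge v w) hbr.1,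
        ih (bridge v w) g w b (List.isChain_cons_cons.mp hch).2 rfl
          (by rw [← hb, List.getLast?_cons_cons]) hbr.2 hbg h]
      generalize ind (h = ((v.1, v.2), false)) = p
      generalize ind (h = f) = q
      generalize ind (h = bridge v w) = r
      generalize ind (h = g) = t
      revert p q r t; decide

lemma capW_incident : ∀ (l : List V2) (f g : Face), ∀ e ∈ capW f l g,
    ∃ x ∈ l, eA e = x ∨ eB e = x := by
  intro l
  induction l with
  | nil => intro f g e he; exact absurd he List.not_mem_nil
  | cons v rest ih =>
    intro f g e he
    cases rest with
    | nil =>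
      rcases List.mem_append.mp he with h | h
      · exact ⟨v, by simp, ringTo_incident v f e h⟩
      · exact ⟨v, by simp, ringTo_incident v g e h⟩
    | cons w rest' =>
      rcases List.mem_append.mp he with h | h
      · rcases List.mem_append.mp h with h' | h'
        · exact ⟨v, by simp, ringTo_incident v f e h'⟩
        · exact ⟨v, by simp, ringTo_incident v (bridge v w) e h'⟩
      · obtain ⟨x, hx, hxe⟩ := ih (bridge v w) g e h
        exact ⟨x, by simp [hx], hxe⟩


/-! ### odd faces have a `P 0` corner, caps, and the full chain -/

lemma odd_struct {x1 x2 x3 : Prop} (hsum : ind x1 + ind x2 + ind x3 = 1) :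
    (x1 ∧ x2 ∧ x3) ∨ (x1 ∧ ¬x2 ∧ ¬x3) ∨ (¬x1 ∧ x2 ∧ ¬x3) ∨ (¬x1 ∧ ¬x2 ∧ x3) := by
  by_cases h1 : x1 <;> by_cases h2 : x2 <;> by_cases h3 : x3 <;>
    first
      | exact Or.inl ⟨h1, h2, h3⟩
      | exact Or.inr (Or.inl ⟨h1, h2, h3⟩)
      | exact Or.inr (Or.inr (Or.inl ⟨h1, h2, h3⟩))
      | exact Or.inr (Or.inr (Or.inr ⟨h1, h2, h3⟩))
      | (exfalso
         first | rw [ind_true h1] at hsum | rw [ind_false h1] at hsum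
         first | rw [ind_true h2] at hsum | rw [ind_false h2] at hsum
         first | rw [ind_true h3] at hsum | rw [ind_false h3] at hsum
         exact absurd hsum (by decide))

section MainPart

variable {n : ℕ} (σ : TriPartition n)

def IPair (u w : V2) : Prop := (u ∈ σ.P 1 ∧ w ∈ σ.P 2) ∨ (u ∈ σ.P 2 ∧ w ∈ σ.P 1)

lemma IPair_comm {u w : V2} : IPair σ u w ↔ IPair σ w u := by
  unfold IPair; tauto

lemma ItfP0 (a b : ℤ) : ItfP σ ((a, b), 0) ↔ IPair σ (a, b) (a + 1, b) := by
  unfold ItfP IPair eA eB evec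
  rw [V2add, show b + 0 = b from by ring]

lemma ItfP1 (a b : ℤ) : ItfP σ ((a, b), 1) ↔ IPair σ (a, b) (a, b + 1) := by
  unfold ItfP IPair eA eB evec
  rw [V2add, show a + 0 = a from by ring]

lemma ItfP2 (a b : ℤ) : ItfP σ ((a, b), 2) ↔ IPair σ (a, b) (a + 1, b - 1) := by
  unfold ItfP IPair eA eB evec
  rw [V2add, show b + -1 = b - 1 from by ring]

lemma mkCondA {u w t : V2} (hu : u ∈ σ.P 1) (hw : w ∈ σ.P 2) (huw : TriLattice.Adj u w)
    (hut : TriLattice.Adj u t) (hwt : TriLattice.Adj w t) (ht : t ∉ Tset n) : CondA n σ :=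
  ⟨u, w, ⟨hu, ⟨P_subset_T σ 1 hu, t, hut, ht⟩⟩, ⟨hw, ⟨P_subset_T σ 2 hw, t, hwt, ht⟩⟩, huw⟩

lemma tri_odd (hA : ¬ CondA n σ) (p q r : V2)
    (hpq : TriLattice.Adj p q) (hpr : TriLattice.Adj p r) (hrq : TriLattice.Adj r q)
    (hsum : ind (IPair σ p q) + ind (IPair σ p r) + ind (IPair σ r q) = 1) :
    p ∈ σ.P 0 ∨ q ∈ σ.P 0 ∨ r ∈ σ.P 0 := by
  rcases odd_struct hsum with ⟨h1, h2, h3⟩ | ⟨h1, h2, h3⟩ | ⟨h1, h2, h3⟩ | ⟨h1, h2, h3⟩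
  · exfalso
    rcases h1 with ⟨hp1, hq2⟩ | ⟨hp2, hq1⟩
    · rcases h3 with ⟨hr1, -⟩ | ⟨-, hq1⟩
      · rcases h2 with ⟨-, hr2⟩ | ⟨hp2, -⟩
        · exact P_disj σ (by decide) hr1 hr2
        · exact P_disj σ (by decide) hp1 hp2
      · exact P_disj σ (by decide) hq1 hq2
    · rcases h3 with ⟨-, hq2⟩ | ⟨hr2, -⟩
      · exact P_disj σ (by decide) hq1 hq2
      · rcases h2 with ⟨hp1, -⟩ | ⟨-, hr1⟩
        · exact P_disj σ (by decide) hp1 hp2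
        · exact P_disj σ (by decide) hr1 hr2
  · -- only p-q interface; classify r
    rcases cls σ r with hr | hr | hr | hr
    · exact Or.inr (Or.inr hr)
    · exfalso
      rcases h1 with ⟨hp1, hq2⟩ | ⟨hp2, hq1⟩
      · exact h3 (Or.inl ⟨hr, hq2⟩)
      · exact h2 (Or.inr ⟨hp2, hr⟩)
    · exfalso
      rcases h1 with ⟨hp1, hq2⟩ | ⟨hp2, hq1⟩
      · exact h2 (Or.inl ⟨hp1, hr⟩)
      · exact h3 (Or.inr ⟨hr, hq1⟩)
    · exfalso
      rcases h1 with ⟨hp1, hq2⟩ | ⟨hp2, hq1⟩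
      · exact hA (mkCondA σ hp1 hq2 hpq hpr (hrq.symm) hr)
      · exact hA (mkCondA σ hq1 hp2 hpq.symm (hrq.symm) hpr hr)
  · -- only p-r interface; classify q
    rcases cls σ q with hq | hq | hq | hq
    · exact Or.inr (Or.inl hq)
    · exfalso
      rcases h2 with ⟨hp1, hr2⟩ | ⟨hp2, hr1⟩
      · exact h3 (Or.inr ⟨hr2, hq⟩)
      · exact h1 (Or.inr ⟨hp2, hq⟩)
    · exfalso
      rcases h2 with ⟨hp1, hr2⟩ | ⟨hp2, hr1⟩
      · exact h1 (Or.inl ⟨hp1, hq⟩)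
      · exact h3 (Or.inl ⟨hr1, hq⟩)
    · exfalso
      rcases h2 with ⟨hp1, hr2⟩ | ⟨hp2, hr1⟩
      · exact hA (mkCondA σ hp1 hr2 hpr hpq hrq hq)
      · exact hA (mkCondA σ hr1 hp2 hpr.symm hrq hpq hq)
  · -- only r-q interface; classify p
    rcases cls σ p with hp | hp | hp | hp
    · exact Or.inl hp
    · exfalso
      rcases h3 with ⟨hr1, hq2⟩ | ⟨hr2, hq1⟩
      · exact h1 (Or.inl ⟨hp, hq2⟩)
      · exact h2 (Or.inl ⟨hp, hr2⟩)
    · exfalso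
      rcases h3 with ⟨hr1, hq2⟩ | ⟨hr2, hq1⟩
      · exact h2 (Or.inr ⟨hp, hr1⟩)
      · exact h1 (Or.inr ⟨hp, hq1⟩)
    · exfalso
      rcases h3 with ⟨hr1, hq2⟩ | ⟨hr2, hq1⟩
      · exact hA (mkCondA σ hr1 hq2 hrq hpr.symm hpq.symm hp)
      · exact hA (mkCondA σ hq1 hr2 hrq.symm hpq.symm hpr.symm hp)

lemma adjC {v w : V2}
    (h : (w.1 - v.1 = 1 ∧ w.2 - v.2 = 0) ∨ (w.1 - v.1 = -1 ∧ w.2 - v.2 = 0) ∨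
      (w.1 - v.1 = 0 ∧ w.2 - v.2 = 1) ∨ (w.1 - v.1 = 0 ∧ w.2 - v.2 = -1) ∨
      (w.1 - v.1 = 1 ∧ w.2 - v.2 = -1) ∨ (w.1 - v.1 = -1 ∧ w.2 - v.2 = 1)) :
    TriLattice.Adj v w := adj_iff.mpr h

lemma odd_corner (hA : ¬ CondA n σ) {f : Face} (hodd : fwt (IL σ) f = 1) :
    ∃ u, hasC u f ∧ u ∈ σ.P 0 := by
  obtain ⟨⟨a, b⟩, bb⟩ := f
  cases bb
  · rw [fwt_L] at hodd
    dsimp only at hodd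
    rw [mem2_IL, mem2_IL, mem2_IL, ind_congr (ItfP0 σ a b), ind_congr (ItfP1 σ a b),
      ind_congr (ItfP2 σ a (b + 1)), show b + 1 - 1 = b from by ring] at hodd
    have := tri_odd σ hA (a, b) (a + 1, b) (a, b + 1)
      (adjC (by dsimp only; omega)) (adjC (by dsimp only; omega))
      (adjC (by dsimp only; omega)) hodd
    rcases this with h | h | h
    · exact ⟨(a, b), (hasC_false_iff _ _ _).mpr (Or.inl ⟨rfl, rfl⟩), h⟩
    · exact ⟨(a + 1, b), (hasC_false_iff _ _ _).mpr (Or.inr (Or.inl ⟨rfl, rfl⟩)), h⟩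
    · exact ⟨(a, b + 1), (hasC_false_iff _ _ _).mpr (Or.inr (Or.inr ⟨rfl, rfl⟩)), h⟩
  · rw [fwt_U] at hodd
    dsimp only at hodd
    rw [mem2_IL, mem2_IL, mem2_IL, ind_congr ((ItfP0 σ a (b + 1)).trans (IPair_comm σ)),
      ind_congr ((ItfP1 σ (a + 1) b).trans (IPair_comm σ)),
      ind_congr ((ItfP2 σ a (b + 1)).trans (IPair_comm σ)),
      show b + 1 - 1 = b from by ring] at hodd
    have := tri_odd σ hA (a + 1, b + 1) (a, b + 1) (a + 1, b)
      (adjC (by dsimp only; omega)) (adjC (by dsimp only; omega))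
      (adjC (by dsimp only; omega)) hodd
    rcases this with h | h | h
    · exact ⟨(a + 1, b + 1), (hasC_true_iff _ _ _).mpr (Or.inr (Or.inr ⟨rfl, rfl⟩)), h⟩
    · exact ⟨(a, b + 1), (hasC_true_iff _ _ _).mpr (Or.inr (Or.inl ⟨rfl, rfl⟩)), h⟩
    · exact ⟨(a + 1, b), (hasC_true_iff _ _ _).mpr (Or.inl ⟨rfl, rfl⟩), h⟩

def fstar : Face := ((1, 0), false)

lemma hasC_c1_fstar : hasC c1 fstar := by
  rw [show fstar = (((1 : ℤ), (0 : ℤ)), false) from rfl, hasC_false_iff]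
  exact Or.inl ⟨rfl, rfl⟩

def GoodCap (f : Face) (l : List V2) : Prop :=
  l.Chain' TriLattice.Adj ∧ (∃ u, l.head? = some u ∧ hasC u f) ∧
    l.getLast? = some c1 ∧ ∀ x ∈ l, x ∈ σ.P 0

lemma cap_exists (hA : ¬ CondA n σ) (hc1 : c1 ∈ σ.P 0) {f : Face}
    (hodd : fwt (IL σ) f = 1) : ∃ l, GoodCap σ f l := by
  obtain ⟨u, huf, hu0⟩ := odd_corner σ hA hodd
  obtain ⟨l, hch, hhd, hlast, hmem⟩ := conn_chain (σ.sc 0).1 hu0 hc1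
  exact ⟨l, hch.imp (fun a b hab => hab.1), ⟨u, hhd, huf⟩, hlast, hmem⟩

open Classical in
noncomputable def capOf (f : Face) : List Edge2 :=
  if h : ∃ l, GoodCap σ f l then capW f h.choose fstar else []

lemma capOf_fwt {f : Face} (hex : ∃ l, GoodCap σ f l) (g : Face) :
    fwt (capOf σ f) g = ind (g = f) + ind (g = fstar) := by
  unfold capOf
  rw [dif_pos hex]
  obtain ⟨hch, ⟨u, hhd, huf⟩, hlast, hmem⟩ := hex.choose_spec
  exact capW_fwt hex.choose f fstar u c1 hch hhd hlast huf hasC_c1_fstar g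

lemma capOf_incident {f : Face} {e : Edge2} (he : e ∈ capOf σ f) :
    ∃ x ∈ σ.P 0, eA e = x ∨ eB e = x := by
  unfold capOf at he
  split_ifs at he with h
  · obtain ⟨hch, ⟨u, hhd, huf⟩, hlast, hmem⟩ := h.choose_spec
    obtain ⟨x, hx, hxe⟩ := capW_incident h.choose f fstar e he
    exact ⟨x, hmem x hx, hxe⟩
  · exact absurd he List.not_mem_nil

noncomputable def oddList : List Face :=
  ((FBox (n := n)).filter (fun f => fwt (IL σ) f = 1)).toList

lemma mem_oddList {f : Face} : f ∈ oddList σ ↔ f ∈ FBox (n := n) ∧ fwt (IL σ) f = 1 := by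
  unfold oddList
  rw [Finset.mem_toList, Finset.mem_filter]

lemma odd_in_box {f : Face} (hf : fwt (IL σ) f = 1) : f ∈ FBox (n := n) := by
  have hne : ∃ e ∈ IL σ, onFace f e := by
    by_contra hno
    push_neg at hno
    rw [show fwt (IL σ) f = wsum (IL σ) (fun e => ind (onFace f e)) from rfl,
      wsum_zero (fun e he => ind_false (hno e he))] at hf
    exact absurd hf (by decide)
  obtain ⟨e, he, hef⟩ := hne
  rcases (onFace_iff f e).mp hef with rfl | rfl
  · exact (IL_faces_in_box σ he).1
  · exact (IL_faces_in_box σ he).2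

noncomputable def CC : List Edge2 := IL σ ++ (oddList σ).flatMap (capOf σ)

lemma sumF_congr {α : Type*} (l : List α) (F G : α → ZMod 2) (h : ∀ a ∈ l, F a = G a) :
    (l.map F).sum = (l.map G).sum := by
  induction l with
  | nil => rfl
  | cons x t ih =>
    simp only [List.map_cons, List.sum_cons]
    rw [h x (by simp), ih (fun a ha => h a (by simp [ha]))]

lemma sumF_add {α : Type*} (l : List α) (F G : α → ZMod 2) :
    (l.map (fun a => F a + G a)).sum = (l.map F).sum + (l.map G).sum := by
  induction l with
  | nil => simp
  | cons x t ih =>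
    simp only [List.map_cons, List.sum_cons, ih]
    ring

lemma CC_even (hA : ¬ CondA n σ) (hc1 : c1 ∈ σ.P 0) : evenFaced (CC σ) := by
  intro g
  show fwt (CC σ) g = 0
  unfold CC
  rw [fwt_append]
  have hflat : fwt ((oddList σ).flatMap (capOf σ)) g
      = ((oddList σ).map (fun f => fwt (capOf σ f) g)).sum := wsum_flatMap _ _ _
  have hnd : (oddList σ).Nodup := by
    unfold oddList
    exact Finset.nodup_toList _
  rw [hflat,
    sumF_congr _ _ (fun f => ind (g = f) + ind (g = fstar)) (fun f hf =>
      capOf_fwt σ (cap_exists σ hA hc1 ((mem_oddList σ).mp hf).2) g),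
    sumF_add, sum_ind_list _ hnd g, sum_const_list]
  have hcard : ((oddList σ).length : ZMod 2) = 0 := by
    unfold oddList
    rw [Finset.length_toList]
    have h2 := odd_count_even σ (n := n)
    have : (2 : ℕ) ∣ ((FBox (n := n)).filter (fun f => fwt (IL σ) f = 1)).card :=
      Nat.dvd_of_mod_eq_zero h2
    rw [ZMod.natCast_eq_zero_iff]
    exact this
  rw [hcard, zero_mul, add_zero]
  have hcases : ∀ a : ZMod 2, a = 0 ∨ a = 1 := by decide
  rcases hcases (fwt (IL σ) g) with h | h
  · rw [h, ind_false, add_zero]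
    intro hg
    exact absurd ((mem_oddList σ).mp hg).2 (by rw [h]; decide)
  · rw [h, ind_true ((mem_oddList σ).mpr ⟨odd_in_box σ h, h⟩)]
    decide

lemma CC_bnd : Bnd (n : ℤ) (CC σ) := by
  intro e he
  unfold CC at he
  rcases List.mem_append.mp he with h | h
  · exact (IL_base_T σ h).2.1
  · obtain ⟨f, hf, hef⟩ := List.mem_flatMap.mp h
    obtain ⟨x, hx0, hxe⟩ := capOf_incident σ hef
    have hxT := P_subset_T σ 0 hx0
    rcases hxe with hxe | hxe
    · rw [show eA e = e.1 from rfl] at hxe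
      rw [hxe]
      exact hxT.2.1
    · have h1 := congrArg Prod.fst hxe
      rw [show (eB e).1 = e.1.1 + (evec e.2).1 from by unfold eB; rw [Prod.fst_add]] at h1
      have hxx : x.1 ≤ (n : ℤ) := hxT.2.1
      have hpos : 0 ≤ (evec e.2).1 := by
        rcases fin3_tri e.2 with h | h | h <;> rw [h] <;> unfold evec <;> dsimp only <;> omega
      omega

lemma CC_classes {e : Edge2} (he : e ∈ CC σ) :
    ItfP σ e ∨ ∃ x ∈ σ.P 0, eA e = x ∨ eB e = x := by
  unfold CC at he
  rcases List.mem_append.mp he with h | h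
  · exact Or.inl ((mem_IL σ).mp h)
  · obtain ⟨f, hf, hef⟩ := List.mem_flatMap.mp h
    exact Or.inr (capOf_incident σ hef)

lemma mem2_CC_zero {v w : V2} (hadj : TriLattice.Adj v w)
    (hnI : ¬ IPair σ v w) (hv0 : v ∉ σ.P 0) (hw0 : w ∉ σ.P 0) :
    mem2 (CC σ) (edgeOf v w) = 0 := by
  refine mem2_eq_zero (fun e' he' heq => ?_)
  subst heq
  rcases CC_classes σ he' with h | ⟨x, hx0, hxe⟩
  · rcases edgeOf_ends hadj with ⟨hA', hB'⟩ | ⟨hA', hB'⟩ <;>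
      rcases h with ⟨h1, h2⟩ | ⟨h1, h2⟩ <;> rw [hA'] at h1 <;> rw [hB'] at h2
    · exact hnI (Or.inl ⟨h1, h2⟩)
    · exact hnI (Or.inr ⟨h1, h2⟩)
    · exact hnI (Or.inr ⟨h2, h1⟩)
    · exact hnI (Or.inl ⟨h2, h1⟩)
  · rcases edgeOf_ends hadj with ⟨hA', hB'⟩ | ⟨hA', hB'⟩ <;> rcases hxe with hxe | hxe
    · exact hv0 (by rw [← hA' , hxe]; exact hx0)
    · exact hw0 (by rw [← hB', hxe]; exact hx0)
    · exact hw0 (by rw [← hA', hxe]; exact hx0)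
    · exact hv0 (by rw [← hB', hxe]; exact hx0)

lemma not_T_of_low {x y : ℤ} (hy : y ≤ -(n : ℤ)) : ((x, y) : V2) ∉ Tset n := by
  rintro ⟨h1, h2, h3, h4⟩
  dsimp only at h1 h2 h3 h4
  omega

lemma mu_out_safe {v w : V2} (hadj : TriLattice.Adj v w) (hv : v ∉ Tset n)
    (hw : w ∉ Tset n) : mem2 (CC σ) (edgeOf v w) = 0 := by
  refine mem2_CC_zero σ hadj ?_ (fun h => hv (P_subset_T σ 0 h)) (fun h => hw (P_subset_T σ 0 h))
  rintro (⟨h1, -⟩ | ⟨h1, -⟩)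
  · exact hv (P_subset_T σ 1 h1)
  · exact hv (P_subset_T σ 2 h1)

lemma mu_far_zero (hA : ¬ CondA n σ) (hc1 : c1 ∈ σ.P 0) {z : V2} (hz : (n : ℤ) < z.1) :
    mu (CC σ) z = 0 := by
  unfold mu
  exact kap_far (CC_bnd σ) (by dsimp only; omega)

lemma mu_right_transport (hA : ¬ CondA n σ) (hc1 : c1 ∈ σ.P 0) {o : V2}
    (K : ℕ) (hout : ∀ j : ℤ, 0 ≤ j → j ≤ K → (o.1 + j, o.2) ∉ Tset n) :
    mu (CC σ) o = mu (CC σ) (o.1 + K, o.2) := by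
  refine mu_chain (CC_even σ hA hc1) (CC_bnd σ) (rightL o K) ?_ o (o.1 + K, o.2)
    (rightL_head o K) (rightL_last o K)
  refine rightL_chain _ K o (fun w hw1 hw2 hw3 => ?_)
  have hadj : TriLattice.Adj w (w.1 + 1, w.2) := adjC (by dsimp only; omega)
  refine ⟨hadj, mu_out_safe σ hadj ?_ ?_⟩
  · have : w = (o.1 + (w.1 - o.1), o.2) := by
      rw [Prod.mk.injEq]; constructor <;> omega
    rw [this]
    exact hout _ (by omega) (by omega)
  · have : ((w.1 + 1, w.2) : V2) = (o.1 + (w.1 + 1 - o.1), o.2) := by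
      rw [Prod.mk.injEq]; constructor <;> [omega; exact hw1]
    rw [this]
    exact hout _ (by omega) (by omega)

lemma mu_down_transport (hA : ¬ CondA n σ) (hc1 : c1 ∈ σ.P 0) {o : V2}
    (K : ℕ) (hout : ∀ j : ℤ, 0 ≤ j → j ≤ K → (o.1, o.2 - j) ∉ Tset n) :
    mu (CC σ) o = mu (CC σ) (o.1, o.2 - K) := by
  refine mu_chain (CC_even σ hA hc1) (CC_bnd σ) (downL o K) ?_ o (o.1, o.2 - K)
    (downL_head o K) (downL_last o K)
  refine downL_chain _ K o (fun w hw1 hw2 hw3 => ?_)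
  have hadj : TriLattice.Adj w (w.1, w.2 - 1) := adjC (by dsimp only; omega)
  refine ⟨hadj, mu_out_safe σ hadj ?_ ?_⟩
  · have : w = (o.1, o.2 - (o.2 - w.2)) := by
      rw [Prod.mk.injEq]; constructor <;> omega
    rw [this]
    exact hout _ (by omega) (by omega)
  · have : ((w.1, w.2 - 1) : V2) = (o.1, o.2 - (o.2 - w.2 + 1)) := by
      rw [Prod.mk.injEq]; constructor <;> omega
    rw [this]
    exact hout _ (by omega) (by omega)

lemma mu_out_zero (hA : ¬ CondA n σ) (hc1 : c1 ∈ σ.P 0) {o : V2} (ho : o ∉ Tset n) :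
    mu (CC σ) o = 0 := by
  by_cases h1 : 1 ≤ o.2
  · set K : ℕ := ((n : ℤ) + 1 - o.1).toNat with hK
    rw [mu_right_transport σ hA hc1 K (fun j hj1 hj2 => ?_)]
    · exact mu_far_zero σ hA hc1 (by dsimp only; omega)
    · rintro ⟨g1, g2, g3, g4⟩
      dsimp only at g4
      omega
  · by_cases h2 : (n : ℤ) < o.1
    · set K : ℕ := ((n : ℤ) + 1 - o.1).toNat with hK
      rw [mu_right_transport σ hA hc1 K (fun j hj1 hj2 => ?_)]
      · exact mu_far_zero σ hA hc1 (by dsimp only; omega)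
      · rintro ⟨g1, g2, g3, g4⟩
        dsimp only at g1 g2
        omega
    · -- o.2 ≤ 0, o.1 ≤ n : either o.1 < 1 or o.2 < 1 - o.1
      have hside : o.1 < 1 ∨ o.2 < 1 - o.1 := by
        by_contra hcon
        push_neg at hcon
        exact ho ⟨hcon.1, by omega, hcon.2, by omega⟩
      set K1 : ℕ := (o.2 + (n : ℤ)).toNat with hK1
      have hlow : o.2 - (K1 : ℤ) ≤ -(n : ℤ) := by omega
      rw [mu_down_transport σ hA hc1 K1 (fun j hj1 hj2 => ?_)]
      · set K2 : ℕ := ((n : ℤ) + 1 - o.1).toNat with hK2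
        rw [show ((o.1, o.2 - (K1 : ℤ)) : V2) = ((o.1, o.2 - (K1 : ℤ)).1, (o.1, o.2 - (K1 : ℤ)).2) from rfl] at *
        rw [mu_right_transport σ hA hc1 (o := (o.1, o.2 - (K1 : ℤ))) K2 (fun j hj1 hj2 => ?_)]
        · exact mu_far_zero σ hA hc1 (by dsimp only; omega)
        · exact not_T_of_low (by dsimp only; omega)
      · rcases hside with hs | hs
        · rintro ⟨g1, g2, g3, g4⟩
          dsimp only at g1
          omega
        · rintro ⟨g1, g2, g3, g4⟩
          dsimp only at g1 g2 g3 g4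
          omega

lemma flat_safe {x y : V2} (hadj : TriLattice.Adj x y) (hx1 : x ∈ σ.P 1) (hy2 : y ∈ σ.P 2) :
    mem2 ((oddList σ).flatMap (capOf σ)) (edgeOf x y) = 0 := by
  refine mem2_eq_zero (fun e' he' heq => ?_)
  subst heq
  obtain ⟨f, hf, hef⟩ := List.mem_flatMap.mp he'
  obtain ⟨x0, hx0, hxe⟩ := capOf_incident σ hef
  rcases edgeOf_ends hadj with ⟨hA', hB'⟩ | ⟨hA', hB'⟩ <;> rcases hxe with hxe | hxe
  · exact P_disj σ (show (0 : Fin 3) ≠ 1 by decide) hx0 (by rw [← hxe, hA']; exact hx1)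
  · exact P_disj σ (show (0 : Fin 3) ≠ 2 by decide) hx0 (by rw [← hxe, hB']; exact hy2)
  · exact P_disj σ (show (0 : Fin 3) ≠ 2 by decide) hx0 (by rw [← hxe, hA']; exact hy2)
  · exact P_disj σ (show (0 : Fin 3) ≠ 1 by decide) hx0 (by rw [← hxe, hB']; exact hx1)

lemma main_contra (hc1 : c1 ∈ σ.P 0) (hA : ¬ CondA n σ) (hB : ¬ CondB n σ)
    (hC : ¬ CondC n σ) (hD : ¬ CondD n σ) : False := by
  have hev := CC_even σ hA hc1
  have hbnd := CC_bnd σ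
  unfold CondD at hD
  push_neg at hD
  obtain ⟨x, hx1, y, hy2, hadj⟩ := hD
  have hxy := dmu_adj hev hbnd hadj
  have hmem : mem2 (CC σ) (edgeOf x y) = 1 := by
    have hsplit : mem2 (CC σ) (edgeOf x y)
        = mem2 (IL σ) (edgeOf x y) + mem2 ((oddList σ).flatMap (capOf σ)) (edgeOf x y) :=
      wsum_append _
    rw [hsplit, mem2_IL, flat_safe σ hadj hx1 hy2, add_zero]
    refine ind_true ?_
    rcases edgeOf_ends hadj with ⟨hA', hB'⟩ | ⟨hA', hB'⟩
    · exact Or.inl ⟨by rw [hA']; exact hx1, by rw [hB']; exact hy2⟩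
    · exact Or.inr ⟨by rw [hA']; exact hy2, by rw [hB']; exact hx1⟩
  -- transport mu x to 0 through P 1 and the outside
  have hmux : mu (CC σ) x = 0 := by
    obtain ⟨p, hp1, hpbd⟩ := Set.nonempty_iff_ne_empty.mpr hB
    obtain ⟨hpT, o, hpo, hoT⟩ := hpbd
    obtain ⟨l, hch, hhd, hlast, -⟩ := conn_chain (σ.sc 1).1 hx1 hp1
    have hch' : l.Chain' (fun a b => TriLattice.Adj a b ∧ mem2 (CC σ) (edgeOf a b) = 0) := by
      refine hch.imp (fun a b hab => ⟨hab.1, mem2_CC_zero σ hab.1 ?_ ?_ ?_⟩)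
      · rintro (⟨-, h2⟩ | ⟨h1, -⟩)
        · exact P_disj σ (by decide) hab.2.2 h2
        · exact P_disj σ (by decide) hab.2.1 h1
      · exact fun h0 => P_disj σ (by decide) h0 hab.2.1
      · exact fun h0 => P_disj σ (by decide) h0 hab.2.2
    have h1 : mu (CC σ) x = mu (CC σ) p := mu_chain hev hbnd l hch' x p hhd hlast
    have h2 : mu (CC σ) p = mu (CC σ) o := by
      refine mu_eq_of_zero hev hbnd hpo (mem2_CC_zero σ hpo ?_ ?_ ?_)
      · rintro (⟨-, h2⟩ | ⟨h1, -⟩)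
        · exact hoT (P_subset_T σ 2 h2)
        · exact P_disj σ (by decide) hp1 h1
      · exact fun h0 => P_disj σ (by decide) h0 hp1
      · exact fun h0 => hoT (P_subset_T σ 0 h0)
    rw [h1, h2]
    exact mu_out_zero σ hA hc1 hoT
  have hmuy : mu (CC σ) y = 0 := by
    obtain ⟨q, hq2, hqbd⟩ := Set.nonempty_iff_ne_empty.mpr hC
    obtain ⟨hqT, o, hqo, hoT⟩ := hqbd
    obtain ⟨l, hch, hhd, hlast, -⟩ := conn_chain (σ.sc 2).1 hy2 hq2
    have hch' : l.Chain' (fun a b => TriLattice.Adj a b ∧ mem2 (CC σ) (edgeOf a b) = 0) := by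
      refine hch.imp (fun a b hab => ⟨hab.1, mem2_CC_zero σ hab.1 ?_ ?_ ?_⟩)
      · rintro (⟨h1, -⟩ | ⟨-, h2⟩)
        · exact P_disj σ (by decide) hab.2.1 h1
        · exact P_disj σ (by decide) hab.2.2 h2
      · exact fun h0 => P_disj σ (by decide) h0 hab.2.1
      · exact fun h0 => P_disj σ (by decide) h0 hab.2.2
    have h1 : mu (CC σ) y = mu (CC σ) q := mu_chain hev hbnd l hch' y q hhd hlast
    have h2 : mu (CC σ) q = mu (CC σ) o := by
      refine mu_eq_of_zero hev hbnd hqo (mem2_CC_zero σ hqo ?_ ?_ ?_)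
      · rintro (⟨h1, -⟩ | ⟨-, h2⟩)
        · exact P_disj σ (by decide) hq2 h1
        · exact hoT (P_subset_T σ 1 h2)
      · exact fun h0 => P_disj σ (by decide) h0 hq2
      · exact fun h0 => hoT (P_subset_T σ 0 h0)
    rw [h1, h2]
    exact mu_out_zero σ hA hc1 hoT
  rw [hmem, hmux, hmuy] at hxy
  exact absurd hxy (by decide)

/-! ### exclusivity -/

lemma P_nonempty (i : Fin 3) : (σ.P i).Nonempty := by
  obtain ⟨⟨v, hv⟩⟩ := (σ.sc i).1.nonempty
  exact ⟨v, hv⟩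

lemma compl_P0 : (σ.P 0)ᶜ = σ.P 1 ∪ (σ.P 2 ∪ (Tset n)ᶜ) := by
  ext v
  rw [Set.mem_compl_iff]
  constructor
  · intro hv
    rcases cls σ v with h | h | h | h
    · exact absurd h hv
    · exact Or.inl h
    · exact Or.inr (Or.inl h)
    · exact Or.inr (Or.inr h)
  · rintro (h | h | h)
    · exact fun h0 => P_disj σ (by decide) h0 h
    · exact fun h0 => P_disj σ (by decide) h0 h
    · exact fun h0 => h (P_subset_T σ 0 h0)

lemma zero_not_T : ((0, 0) : V2) ∉ Tset n := by
  rintro ⟨g1, -, -, -⟩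
  dsimp only at g1
  omega

lemma exclBD (hB : CondB n σ) (hD : CondD n σ) : False := by
  have hconn := (σ.sc 0).2
  unfold ConnSet at hconn
  rw [compl_P0 σ] at hconn
  refine not_conn_sep (P_nonempty σ 1)
    ⟨(0, 0), Or.inr (zero_not_T (n := n))⟩ ?_ ?_ hconn
  · refine Set.disjoint_left.mpr (fun v hv1 => ?_)
    rintro (h | h)
    · exact P_disj σ (by decide) hv1 h
    · exact h (P_subset_T σ 1 hv1)
  · intro v hv w hw
    rcases hw with h | h
    · exact hD v hv w h
    · intro hadj
      exact (Set.eq_empty_iff_forall_notMem.mp hB v)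
        ⟨hv, ⟨P_subset_T σ 1 hv, w, hadj, h⟩⟩

lemma exclCD (hC : CondC n σ) (hD : CondD n σ) : False := by
  have hconn := (σ.sc 0).2
  unfold ConnSet at hconn
  rw [compl_P0 σ, Set.union_left_comm] at hconn
  refine not_conn_sep (P_nonempty σ 2)
    ⟨(0, 0), Or.inr (zero_not_T (n := n))⟩ ?_ ?_ hconn
  · refine Set.disjoint_left.mpr (fun v hv2 => ?_)
    rintro (h | h)
    · exact P_disj σ (by decide) hv2 h
    · exact h (P_subset_T σ 2 hv2)
  · intro v hv w hw
    rcases hw with h | h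
    · exact fun hadj => hD w h v hv hadj.symm
    · intro hadj
      exact (Set.eq_empty_iff_forall_notMem.mp hC v)
        ⟨hv, ⟨P_subset_T σ 2 hv, w, hadj, h⟩⟩

lemma exclBC (hB : CondB n σ) (hC : CondC n σ) : False := by
  have hconn := (σ.sc 0).2
  unfold ConnSet at hconn
  rw [compl_P0 σ, ← Set.union_assoc] at hconn
  refine not_conn_sep ?_ ⟨(0, 0), zero_not_T (n := n)⟩ ?_ ?_ hconn
  · obtain ⟨v, hv⟩ := P_nonempty σ 1
    exact ⟨v, Or.inl hv⟩
  · refine Set.disjoint_left.mpr (fun v hv => ?_)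
    rcases hv with h | h
    · exact fun hc => hc (P_subset_T σ 1 h)
    · exact fun hc => hc (P_subset_T σ 2 h)
  · intro v hv w hw hadj
    rcases hv with h | h
    · exact (Set.eq_empty_iff_forall_notMem.mp hB v)
        ⟨h, ⟨P_subset_T σ 1 h, w, hadj, hw⟩⟩
    · exact (Set.eq_empty_iff_forall_notMem.mp hC v)
        ⟨h, ⟨P_subset_T σ 2 h, w, hadj, hw⟩⟩

end MainPart

/-- Lemma 4.25: for a partition with `C_1 ∈ P_1`, exactly one of the four cases
(A), (B), (C), (D) holds. -/
theorem four_cases (n : ℕ) (σ : TriPartition n) (hc1 : c1 ∈ σ.P 0) :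
    (CondA n σ ∧ ¬ CondB n σ ∧ ¬ CondC n σ ∧ ¬ CondD n σ) ∨
    (¬ CondA n σ ∧ CondB n σ ∧ ¬ CondC n σ ∧ ¬ CondD n σ) ∨
    (¬ CondA n σ ∧ ¬ CondB n σ ∧ CondC n σ ∧ ¬ CondD n σ) ∨
    (¬ CondA n σ ∧ ¬ CondB n σ ∧ ¬ CondC n σ ∧ CondD n σ) := by
  by_cases hA : CondA n σ
  · left
    obtain ⟨a, b, ha, hb, hab⟩ := hA
    refine ⟨⟨a, b, ha, hb, hab⟩, ?_, ?_, ?_⟩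
    · intro hB
      rw [hB] at ha
      exact ha.elim
    · intro hC
      rw [hC] at hb
      exact hb.elim
    · intro hD
      exact hD a ha.1 b hb.1 hab
  · by_cases hB : CondB n σ
    · exact Or.inr (Or.inl ⟨hA, hB, fun hC => exclBC σ hB hC, fun hD => exclBD σ hB hD⟩)
    · by_cases hC : CondC n σ
      · exact Or.inr (Or.inr (Or.inl ⟨hA, hB, hC, fun hD => exclCD σ hC hD⟩))
      · refine Or.inr (Or.inr (Or.inr ⟨hA, hB, hC, ?_⟩))
        by_contra hD
        exact main_contra σ hc1 hA hB hC hD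


end Redistrict
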